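/- arXiv:1909.02281 — 5 statements merged into one kernel-verified Lean document; each statement's English description precedes it below -/
import Mathlib

section
/- Let X be a Dedekind complete Banach lattice with order continuous norm and let (S_λ)_{λ∈Λ} be a nonempty family of convex monotone semigroups on X. Assume that for every h > 0 and x ∈ X the set {S_λ(h)x : λ ∈ Λ} is bounded above, and let J_h x := sup_{λ∈Λ} S_λ(h)x (with J_0 := id). Assume further that for every t ≥ 0 there is a bounded operator C(t) : X → X with J_π x ≤ C(t)x for all π ∈ P_t and x ∈ X. Define S(t)x := sup_{π ∈ P_t} J_π x. Then: (a) S = (S(t))_{t≥0} is a convex monotone semigroup on X; (b) S is an upper bound of the family, i.e., S_λ(t)x ≤ S(t)x for all λ ∈ Λ, t ≥ 0, x ∈ X; (c) S is the semigroup envelope, i.e., if T is any semigroup on X with S_λ(t)x ≤ T(t)x for all λ, t, x, then S(t)x ≤ T(t)x for all t, x; (d) if moreover ‖C(t)x − x‖ → 0 as t ↓ 0 for all x ∈ X and S_{λ₀} is a C₀-semigroup for some λ₀ ∈ Λ, then S is a C₀-semigroup; (e) if every S_λ is sublinear, then S is sublinear. -/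
open Filter Topology Set

variable {X : Type*} [NormedAddCommGroup X] [Lattice X] [HasSolidNorm X] [IsOrderedAddMonoid X] [NormedSpace ℝ X] [CompleteSpace X]

/-- Iterated application of the one-step Nisio operators along a list of (time) increments:
for `l = [h₁, h₂, …, hₘ]`, `nisioIter J l x = J h₁ (J h₂ (⋯ (J hₘ x)))`, corresponding to
`J_π` for the partition `π = {0 = t₀ < t₁ < ⋯ < tₘ}` with increments `hⱼ = tⱼ − t_{j−1}`. -/
def nisioIter (J : ℝ → X → X) : List ℝ → X → X
  | [], x => x
  | h :: l, x => J h (nisioIter J l x)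

set_option linter.unusedSectionVars false
set_option linter.unusedVariables false

lemma nisioIter_append (J : ℝ → X → X) (l₁ l₂ : List ℝ) (x : X) :
    nisioIter J (l₁ ++ l₂) x = nisioIter J l₁ (nisioIter J l₂ x) := by
  induction l₁ with
  | nil => rfl
  | cons h t ih => simp [nisioIter, ih]

lemma exists_refinement (J : ℝ → X → X)
    (Jmono : ∀ h : ℝ, 0 < h → ∀ x y : X, x ≤ y → J h x ≤ J h y)
    (Jmerge : ∀ a b : ℝ, 0 < a → 0 < b → ∀ x : X, J (a + b) x ≤ J a (J b x)) :
    ∀ (n : ℕ) (l₁ l₂ : List ℝ), l₁.length + l₂.length ≤ n →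
      (∀ h ∈ l₁, 0 < h) → (∀ h ∈ l₂, 0 < h) → l₁.sum = l₂.sum →
      ∃ m : List ℝ, (∀ h ∈ m, 0 < h) ∧ m.sum = l₁.sum ∧
      ∀ x : X, nisioIter J l₁ x ≤ nisioIter J m x ∧
        nisioIter J l₂ x ≤ nisioIter J m x := by
  intro n
  induction n with
  | zero =>
    intro l₁ l₂ hlen h₁ h₂ hsum
    have e1 : l₁ = [] := List.length_eq_zero_iff.mp (by omega)
    have e2 : l₂ = [] := List.length_eq_zero_iff.mp (by omega)
    subst e1; subst e2
    exact ⟨[], by simp, by simp, fun x => ⟨le_rfl, le_rfl⟩⟩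
  | succ n ih =>
    intro l₁ l₂ hlen h₁ h₂ hsum
    match l₁, l₂ with
    | [], l₂ =>
      have : l₂ = [] := by
        rcases l₂ with _ | ⟨b, t⟩
        · rfl
        · exfalso
          have hb : 0 < b := h₂ b (by simp)
          have ht : 0 ≤ t.sum := List.sum_nonneg fun x hx => (h₂ x (by simp [hx])).le
          simp [List.sum_cons] at hsum
          linarith
      subst this
      exact ⟨[], by simp, by simp, fun x => ⟨le_rfl, le_rfl⟩⟩
    | l₁, [] =>
      have : l₁ = [] := by
        rcases l₁ with _ | ⟨b, t⟩
        · rfl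
        · exfalso
          have hb : 0 < b := h₁ b (by simp)
          have ht : 0 ≤ t.sum := List.sum_nonneg fun x hx => (h₁ x (by simp [hx])).le
          simp [List.sum_cons] at hsum
          linarith
      subst this
      exact ⟨[], by simp, by simp, fun x => ⟨le_rfl, le_rfl⟩⟩
    | a :: t₁, b :: t₂ =>
      have ha : 0 < a := h₁ a (by simp)
      have hb : 0 < b := h₂ b (by simp)
      have ht₁ : ∀ h ∈ t₁, 0 < h := fun h hh => h₁ h (by simp [hh])
      have ht₂ : ∀ h ∈ t₂, 0 < h := fun h hh => h₂ h (by simp [hh])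
      have hsum' : a + t₁.sum = b + t₂.sum := by simpa [List.sum_cons] using hsum
      by_cases hab : a = b
      · obtain ⟨m, hm1, hm2, hm3⟩ := ih t₁ t₂ (by simp at hlen ⊢; omega) ht₁ ht₂
          (by linarith)
        refine ⟨a :: m, ?_, ?_, ?_⟩
        · intro h hh
          rcases List.mem_cons.mp hh with h1 | h1
          · exact h1 ▸ ha
          · exact hm1 h h1
        · simp [List.sum_cons, hm2]
        · intro x
          refine ⟨Jmono a ha _ _ (hm3 x).1, ?_⟩
          show J b (nisioIter J t₂ x) ≤ J a (nisioIter J m x)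
          rw [hab]
          exact Jmono b hb _ _ (hm3 x).2
      · by_cases hlt : a < b
        · have hpos : 0 < b - a := by linarith
          obtain ⟨m, hm1, hm2, hm3⟩ := ih t₁ ((b - a) :: t₂) (by simp at hlen ⊢; omega) ht₁
            (by intro h hh; rcases List.mem_cons.mp hh with h1 | h1
                · exact h1 ▸ hpos
                · exact ht₂ h h1)
            (by rw [List.sum_cons]; linarith)
          refine ⟨a :: m, ?_, ?_, ?_⟩
          · intro h hh
            rcases List.mem_cons.mp hh with h1 | h1
            · exact h1 ▸ ha
            · exact hm1 h h1
          · simp [List.sum_cons, hm2]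
          · intro x
            refine ⟨Jmono a ha _ _ (hm3 x).1, ?_⟩
            calc nisioIter J (b :: t₂) x = J b (nisioIter J t₂ x) := rfl
              _ = J (a + (b - a)) (nisioIter J t₂ x) := by ring_nf
              _ ≤ J a (J (b - a) (nisioIter J t₂ x)) := Jmerge a (b - a) ha hpos _
              _ = J a (nisioIter J ((b - a) :: t₂) x) := rfl
              _ ≤ J a (nisioIter J m x) := Jmono a ha _ _ (hm3 x).2
        · have hgt : b < a := lt_of_le_of_ne (not_lt.mp hlt) (Ne.symm hab)
          have hpos : 0 < a - b := by linarith
          obtain ⟨m, hm1, hm2, hm3⟩ := ih ((a - b) :: t₁) t₂ (by simp at hlen ⊢; omega)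
            (by intro h hh; rcases List.mem_cons.mp hh with h1 | h1
                · exact h1 ▸ hpos
                · exact ht₁ h h1)
            ht₂ (by rw [List.sum_cons]; linarith)
          refine ⟨b :: m, ?_, ?_, ?_⟩
          · intro h hh
            rcases List.mem_cons.mp hh with h1 | h1
            · exact h1 ▸ hb
            · exact hm1 h h1
          · simp only [List.sum_cons, hm2]; ring
          · intro x
            constructor
            · calc nisioIter J (a :: t₁) x = J a (nisioIter J t₁ x) := rfl
                _ = J (b + (a - b)) (nisioIter J t₁ x) := by ring_nf
                _ ≤ J b (J (a - b) (nisioIter J t₁ x)) := Jmerge b (a - b) hb hpos _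
                _ = J b (nisioIter J ((a - b) :: t₁) x) := rfl
                _ ≤ J b (nisioIter J m x) := Jmono b hb _ _ (hm3 x).1
            · exact Jmono b hb _ _ (hm3 x).2


lemma isGLB_sub_of_isLUB (a : ℕ → X) (c : X) (hub : ∀ n, a n ≤ c)
    (hc : IsLUB (Set.range a) c) : IsGLB (Set.range fun n => c - a n) 0 := by
  constructor
  · rintro v ⟨n, rfl⟩
    simpa using hub n
  · intro w hw
    have : ∀ n, a n ≤ c - w := by
      intro n
      have := hw ⟨n, rfl⟩
      exact le_sub_comm.mp this
    have hcw : c ≤ c - w := hc.2 (by rintro v ⟨n, rfl⟩; exact this n)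
    simpa using hcw

/-- The supremum of an upward directed set is approximated in norm by its elements,
in a Dedekind complete Banach lattice with (sequentially) order continuous norm. -/
lemma directed_sup_norm_approx
    (hDedC : ∀ s : Set X, s.Nonempty → BddAbove s → ∃ b : X, IsLUB s b)
    (hoc : ∀ f : ℕ → X, Antitone f → IsGLB (Set.range f) 0 →
      Tendsto (fun n => ‖f n‖) atTop (𝓝 (0 : ℝ)))
    (D : Set X) (hne : D.Nonempty)
    (hdir : ∀ x ∈ D, ∀ y ∈ D, ∃ z ∈ D, x ≤ z ∧ y ≤ z)
    (b : X) (hb : IsLUB D b) :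
    ∀ ε : ℝ, 0 < ε → ∃ x ∈ D, ‖b - x‖ ≤ ε := by
  -- Step 1: tails become norm-small
  have tail : ∀ x₀ ∈ D, ∀ δ : ℝ, 0 < δ →
      ∃ x ∈ D, x₀ ≤ x ∧ ∀ y ∈ D, x ≤ y → ‖y - x‖ ≤ δ := by
    intro x₀ hx₀ δ hδ
    by_contra hcon
    push_neg at hcon
    -- every tail element has a successor far away
    have step : ∀ p : {v : X // v ∈ D ∧ x₀ ≤ v},
        ∃ q : {v : X // v ∈ D ∧ x₀ ≤ v}, p.1 ≤ q.1 ∧ δ < ‖q.1 - p.1‖ := by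
      rintro ⟨p, hpD, hp0⟩
      obtain ⟨y, hyD, hpy, hy⟩ := hcon p hpD hp0
      exact ⟨⟨y, hyD, le_trans hp0 hpy⟩, hpy, hy⟩
    choose f hf1 hf2 using step
    let a : ℕ → {v : X // v ∈ D ∧ x₀ ≤ v} := fun n => f^[n] ⟨x₀, hx₀, le_rfl⟩
    have ha : ∀ n, a (n + 1) = f (a n) := fun n => Function.iterate_succ_apply' f n _
    have hmono : Monotone fun n => (a n).1 :=
      monotone_nat_of_le_succ fun n => by rw [ha n]; exact hf1 (a n)
    have hfar : ∀ n, δ < ‖(a (n + 1)).1 - (a n).1‖ := fun n => by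
      rw [ha n]; exact hf2 (a n)
    obtain ⟨c, hc⟩ := hDedC (Set.range fun n => (a n).1) ⟨(a 0).1, ⟨0, rfl⟩⟩
      ⟨b, by rintro v ⟨n, rfl⟩; exact hb.1 (a n).2.1⟩
    have hub : ∀ n, (a n).1 ≤ c := fun n => hc.1 ⟨n, rfl⟩
    have hten := hoc (fun n => c - (a n).1)
      (fun i j hij => sub_le_sub_left (hmono hij) c)
      (isGLB_sub_of_isLUB _ c hub hc)
    rw [Metric.tendsto_atTop] at hten
    obtain ⟨N, hN⟩ := hten (δ / 2) (by linarith)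
    have h1 := hN N le_rfl
    have h2 := hN (N + 1) (by omega)
    simp [Real.dist_eq, abs_of_nonneg (norm_nonneg _)] at h1 h2
    have := hfar N
    have hle : ‖(a (N + 1)).1 - (a N).1‖ ≤ ‖c - (a N).1‖ + ‖c - (a (N + 1)).1‖ := by
      have : (a (N + 1)).1 - (a N).1 = (c - (a N).1) - (c - (a (N + 1)).1) := by abel
      rw [this]
      exact norm_sub_le _ _
    linarith
  -- Step 2: recursively refine tails
  obtain ⟨x₀, hx₀⟩ := hne
  have step2 : ∀ (n : ℕ) (p : {v : X // v ∈ D}),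
      ∃ q : {v : X // v ∈ D}, p.1 ≤ q.1 ∧
        ∀ y ∈ D, q.1 ≤ y → ‖y - q.1‖ ≤ 1 / (n + 1) := by
    intro n p
    obtain ⟨x, hxD, hpx, hx⟩ := tail p.1 p.2 (1 / (n + 1)) (by positivity)
    exact ⟨⟨x, hxD⟩, hpx, hx⟩
  choose g hg1 hg2 using step2
  let seq : ℕ → {v : X // v ∈ D} := fun n => Nat.rec (g 0 ⟨x₀, hx₀⟩) (fun n p => g (n + 1) p) n
  have hseq_succ : ∀ n, seq (n + 1) = g (n + 1) (seq n) := fun n => rfl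
  have hP : ∀ n, ∀ y ∈ D, (seq n).1 ≤ y → ‖y - (seq n).1‖ ≤ 1 / (n + 1) := by
    intro n
    cases n with
    | zero => exact hg2 0 ⟨x₀, hx₀⟩
    | succ m => rw [hseq_succ m]; exact hg2 (m + 1) (seq m)
  have hmono : Monotone fun n => (seq n).1 :=
    monotone_nat_of_le_succ fun n => by rw [hseq_succ n]; exact hg1 (n + 1) (seq n)
  obtain ⟨c, hc⟩ := hDedC (Set.range fun n => (seq n).1) ⟨(seq 0).1, ⟨0, rfl⟩⟩
    ⟨b, by rintro v ⟨n, rfl⟩; exact hb.1 (seq n).2⟩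
  have hub : ∀ n, (seq n).1 ≤ c := fun n => hc.1 ⟨n, rfl⟩
  -- c is an upper bound of D
  have hcub : ∀ y ∈ D, y ≤ c := by
    intro y hy
    have key : ∀ n : ℕ, ‖(y - c)⁺‖ ≤ 1 / (n + 1) := by
      intro n
      obtain ⟨z, hzD, hyz, hsz⟩ := hdir y hy (seq n).1 (seq n).2
      have h1 : y - c ≤ z - (seq n).1 := by
        have : y - c ≤ z - c := by simpa using hyz
        refine this.trans ?_
        have := hub n
        simpa using sub_le_sub_left (hub n) z
      have h2 : (y - c)⁺ ≤ z - (seq n).1 := by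
        calc (y - c)⁺ ≤ (z - (seq n).1)⁺ := posPart_mono h1
          _ = z - (seq n).1 := posPart_eq_self.mpr (by simpa using hsz)
      have h3 : ‖(y - c)⁺‖ ≤ ‖z - (seq n).1‖ := by
        apply HasSolidNorm.solid
        rw [abs_of_nonneg (posPart_nonneg _), abs_of_nonneg (by simpa using hsz)]
        exact h2
      exact h3.trans (hP n z hzD hsz)
    have hzero : ‖(y - c)⁺‖ ≤ 0 :=
      ge_of_tendsto' tendsto_one_div_add_atTop_nhds_zero_nat key
    have : (y - c)⁺ = 0 := by
      have := le_antisymm hzero (norm_nonneg _)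
      simpa [norm_eq_zero] using this
    exact sub_nonpos.mp (posPart_eq_zero.mp this)
  have hbc : b = c := le_antisymm (hb.2 hcub)
    (hc.2 (by rintro v ⟨n, rfl⟩; exact hb.1 (seq n).2))
  intro ε hε
  have hten := hoc (fun n => b - (seq n).1)
    (fun i j hij => sub_le_sub_left (hmono hij) b)
    (by rw [hbc]; exact isGLB_sub_of_isLUB _ c hub hc)
  rw [Metric.tendsto_atTop] at hten
  obtain ⟨N, hN⟩ := hten ε hε
  have := hN N le_rfl
  rw [Real.dist_eq, sub_zero, abs_of_nonneg (norm_nonneg _)] at this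
  exact ⟨(seq N).1, (seq N).2, this.le⟩


/-- A convex operator bounded on bounded sets is uniformly continuous on balls. -/
lemma convex_bdd_cont [PosSMulStrictMono ℝ X] [PosSMulReflectLT ℝ X] (S : X → X)
    (hc : ∀ x y : X, ∀ a : ℝ, 0 ≤ a → a ≤ 1 → S (a • x + (1 - a) • y) ≤ a • S x + (1 - a) • S y)
    (hb : ∀ r : ℝ, 0 < r → ∃ M : ℝ, ∀ x : X, ‖x‖ ≤ r → ‖S x‖ ≤ M)
    (R ε : ℝ) (hR : 0 < R) (hε : 0 < ε) :
    ∃ δ : ℝ, 0 < δ ∧ ∀ y z : X, ‖y‖ ≤ R → ‖z‖ ≤ R → ‖z - y‖ ≤ δ →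
      ‖S z - S y‖ ≤ ε := by
  obtain ⟨M, hM⟩ := hb (R + 1) (by linarith)
  set M' := max M 1 with hM'def
  have hM'pos : (0 : ℝ) < M' := lt_of_lt_of_le one_pos (le_max_right _ _)
  have hM' : ∀ x : X, ‖x‖ ≤ R + 1 → ‖S x‖ ≤ M' := fun x hx => (hM x hx).trans (le_max_left _ _)
  set δ := min 1 (ε / (4 * M')) with hδdef
  have hδpos : 0 < δ := lt_min one_pos (by positivity)
  have hδ1 : δ ≤ 1 := min_le_left _ _
  have hδ2 : δ ≤ ε / (4 * M') := min_le_right _ _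
  refine ⟨δ, hδpos, ?_⟩
  have key : ∀ y z : X, ‖y‖ ≤ R → ‖z‖ ≤ R → ‖z - y‖ ≤ δ → ‖(S z - S y)⁺‖ ≤ ε / 2 := by
    intro y z hy hz hzy
    set w := y + δ⁻¹ • (z - y) with hwdef
    have hw : ‖w‖ ≤ R + 1 := by
      calc ‖w‖ ≤ ‖y‖ + ‖δ⁻¹ • (z - y)‖ := norm_add_le _ _
        _ = ‖y‖ + δ⁻¹ * ‖z - y‖ := by
            rw [norm_smul, Real.norm_eq_abs, abs_of_pos (by positivity)]
        _ ≤ R + δ⁻¹ * δ := by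
            have : δ⁻¹ * ‖z - y‖ ≤ δ⁻¹ * δ := by
              apply mul_le_mul_of_nonneg_left hzy (by positivity)
            linarith
        _ = R + 1 := by rw [inv_mul_cancel₀ hδpos.ne']
    have hzeq : z = δ • w + (1 - δ) • y := by
      rw [hwdef, smul_add, smul_inv_smul₀ hδpos.ne', sub_smul, one_smul]
      abel
    have hconv : S z ≤ δ • S w + (1 - δ) • S y := by
      rw [hzeq]
      exact hc w y δ hδpos.le hδ1
    have hsub : S z - S y ≤ δ • (S w - S y) := by
      rw [smul_sub]
      have : δ • S w + (1 - δ) • S y - S y = δ • S w - δ • S y := by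
        rw [sub_smul, one_smul]; abel
      calc S z - S y ≤ δ • S w + (1 - δ) • S y - S y := sub_le_sub_right hconv _
        _ = δ • S w - δ • S y := this
    have habs : S z - S y ≤ δ • |S w - S y| := by
      refine hsub.trans ?_
      exact smul_le_smul_of_nonneg_left (le_abs_self _) hδpos.le
    have hpos : (0 : X) ≤ δ • |S w - S y| := smul_nonneg hδpos.le (abs_nonneg _)
    have hppart : (S z - S y)⁺ ≤ δ • |S w - S y| := by
      calc (S z - S y)⁺ ≤ (δ • |S w - S y|)⁺ := posPart_mono habs
        _ = δ • |S w - S y| := posPart_eq_self.mpr hpos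
    have hnorm : ‖(S z - S y)⁺‖ ≤ ‖δ • |S w - S y|‖ := by
      apply HasSolidNorm.solid
      rw [abs_of_nonneg (posPart_nonneg _), abs_of_nonneg hpos]
      exact hppart
    have hSw : ‖S w‖ ≤ M' := hM' w hw
    have hSy : ‖S y‖ ≤ M' := hM' y (by linarith)
    calc ‖(S z - S y)⁺‖ ≤ ‖δ • |S w - S y|‖ := hnorm
      _ = δ * ‖S w - S y‖ := by
          rw [norm_smul, Real.norm_eq_abs, abs_of_pos hδpos, norm_abs_eq_norm]
      _ ≤ δ * (2 * M') := by
          apply mul_le_mul_of_nonneg_left _ hδpos.le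
          calc ‖S w - S y‖ ≤ ‖S w‖ + ‖S y‖ := norm_sub_le _ _
            _ ≤ 2 * M' := by linarith
      _ ≤ ε / (4 * M') * (2 * M') := by
          apply mul_le_mul_of_nonneg_right hδ2 (by positivity)
      _ = ε / 2 := by field_simp; ring
  intro y z hy hz hzy
  have h1 := key y z hy hz hzy
  have h2 := key z y hz hy (by rw [← neg_sub, norm_neg]; exact hzy)
  have hdecomp : S z - S y = (S z - S y)⁺ - (S z - S y)⁻ := (posPart_sub_negPart _).symm
  have hneg : (S z - S y)⁻ = (S y - S z)⁺ := by rw [← neg_sub (S z) (S y)]; rfl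
  calc ‖S z - S y‖ = ‖(S z - S y)⁺ - (S z - S y)⁻‖ := by rw [← hdecomp]
    _ ≤ ‖(S z - S y)⁺‖ + ‖(S z - S y)⁻‖ := norm_sub_le _ _
    _ = ‖(S z - S y)⁺‖ + ‖(S y - S z)⁺‖ := by rw [hneg]
    _ ≤ ε / 2 + ε / 2 := add_le_add h1 h2
    _ = ε := by ring


/-- Nisio construction of the semigroup envelope. Let `X` be a Dedekind
complete Banach lattice with order continuous norm, `(S_λ)_{λ∈Λ}` a nonempty family of
convex monotone semigroups on `X`, `J h x = sup_λ S_λ(h)x` (assumed to exist), and suppose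
`J_π x ≤ C(t)x` for all partitions `π ∈ P_t`, with `C(t)` a bounded operator. Let
`Senv t x = sup_{π ∈ P_t} J_π x`. Then (a) `Senv` is a convex monotone semigroup of
bounded operators, (b) it dominates each `S_λ`, (c) it is below any other semigroup upper
bound, (d) if `C(t)x → x` as `t ↓ 0` and some `S_{λ₀}` is strongly continuous then `Senv`
is a C₀-semigroup, and (e) if each `S_λ` is sublinear (positively homogeneous) then so
is `Senv`. -/
theorem nisio_semigroup_envelope
    [PosSMulStrictMono ℝ X] [PosSMulReflectLT ℝ X]
    (hDedC : ∀ s : Set X, s.Nonempty → BddAbove s → ∃ b : X, IsLUB s b)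
    (hoc : ∀ f : ℕ → X, Antitone f → IsGLB (Set.range f) 0 →
      Tendsto (fun n => ‖f n‖) atTop (𝓝 (0 : ℝ)))
    {Λ : Type*} [Nonempty Λ]
    (Sf : Λ → ℝ → X → X)
    (hconv : ∀ l : Λ, ∀ t : ℝ, 0 ≤ t → ∀ x y : X, ∀ a : ℝ, 0 ≤ a → a ≤ 1 →
      Sf l t (a • x + (1 - a) • y) ≤ a • Sf l t x + (1 - a) • Sf l t y)
    (hmono : ∀ l : Λ, ∀ t : ℝ, 0 ≤ t → ∀ x y : X, x ≤ y → Sf l t x ≤ Sf l t y)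
    (hbdd : ∀ l : Λ, ∀ t : ℝ, 0 ≤ t → ∀ r : ℝ, 0 < r →
      ∃ M : ℝ, ∀ x : X, ‖x‖ ≤ r → ‖Sf l t x‖ ≤ M)
    (hid : ∀ l : Λ, ∀ x : X, Sf l 0 x = x)
    (hsg : ∀ l : Λ, ∀ s t : ℝ, 0 ≤ s → 0 ≤ t → ∀ x : X, Sf l (t + s) x = Sf l t (Sf l s x))
    (J : ℝ → X → X)
    (hJ : ∀ h : ℝ, 0 < h → ∀ x : X, IsLUB (Set.range fun l : Λ => Sf l h x) (J h x))
    (C : ℝ → X → X)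
    (hCbdd : ∀ t : ℝ, 0 ≤ t → ∀ r : ℝ, 0 < r → ∃ M : ℝ, ∀ x : X, ‖x‖ ≤ r → ‖C t x‖ ≤ M)
    (hCbound : ∀ t : ℝ, 0 ≤ t → ∀ l : List ℝ, (∀ h ∈ l, 0 < h) → l.sum = t →
      ∀ x : X, nisioIter J l x ≤ C t x)
    (Senv : ℝ → X → X)
    (hSenv : ∀ t : ℝ, 0 ≤ t → ∀ x : X,
      IsLUB {v : X | ∃ l : List ℝ, (∀ h ∈ l, 0 < h) ∧ l.sum = t ∧ v = nisioIter J l x}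
        (Senv t x)) :
    -- (a) `Senv` is a convex monotone semigroup of bounded operators
    ((∀ t : ℝ, 0 ≤ t →
        (∀ x y : X, ∀ a : ℝ, 0 ≤ a → a ≤ 1 →
          Senv t (a • x + (1 - a) • y) ≤ a • Senv t x + (1 - a) • Senv t y) ∧
        (∀ x y : X, x ≤ y → Senv t x ≤ Senv t y) ∧
        (∀ r : ℝ, 0 < r → ∃ M : ℝ, ∀ x : X, ‖x‖ ≤ r → ‖Senv t x‖ ≤ M)) ∧
      (∀ x : X, Senv 0 x = x) ∧
      (∀ s t : ℝ, 0 ≤ s → 0 ≤ t → ∀ x : X, Senv (t + s) x = Senv t (Senv s x))) ∧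
    -- (b) `Senv` is an upper bound of the family
    (∀ l : Λ, ∀ t : ℝ, 0 ≤ t → ∀ x : X, Sf l t x ≤ Senv t x) ∧
    -- (c) `Senv` is the least semigroup upper bound
    (∀ T : ℝ → X → X,
      (∀ t : ℝ, 0 ≤ t → ∀ r : ℝ, 0 < r → ∃ M : ℝ, ∀ x : X, ‖x‖ ≤ r → ‖T t x‖ ≤ M) →
      (∀ x : X, T 0 x = x) →
      (∀ s t : ℝ, 0 ≤ s → 0 ≤ t → ∀ x : X, T (t + s) x = T t (T s x)) →
      (∀ l : Λ, ∀ t : ℝ, 0 ≤ t → ∀ x : X, Sf l t x ≤ T t x) →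
      ∀ t : ℝ, 0 ≤ t → ∀ x : X, Senv t x ≤ T t x) ∧
    -- (d) strong continuity
    ((∀ x : X, Tendsto (fun t : ℝ => C t x) (𝓝[>] (0 : ℝ)) (𝓝 x)) →
      (∃ l₀ : Λ, ∀ x : X, Tendsto (fun t : ℝ => Sf l₀ t x) (𝓝[>] (0 : ℝ)) (𝓝 x)) →
      ∀ x : X, Tendsto (fun t : ℝ => Senv t x) (𝓝[>] (0 : ℝ)) (𝓝 x)) ∧
    -- (e) sublinearity
    ((∀ l : Λ, ∀ t : ℝ, 0 ≤ t → ∀ a : ℝ, 0 < a → ∀ x : X, Sf l t (a • x) = a • Sf l t x) →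
      ∀ t : ℝ, 0 ≤ t → ∀ a : ℝ, 0 < a → ∀ x : X, Senv t (a • x) = a • Senv t x) := by
  
  classical
  set l₀ : Λ := Classical.arbitrary Λ with hl₀def
  -- basic properties of J
  have Jub : ∀ h : ℝ, 0 < h → ∀ (lam : Λ) (x : X), Sf lam h x ≤ J h x :=
    fun h hh lam x => (hJ h hh x).1 ⟨lam, rfl⟩
  have Jlub : ∀ h : ℝ, 0 < h → ∀ (x u : X), (∀ lam : Λ, Sf lam h x ≤ u) → J h x ≤ u :=
    fun h hh x u hu => (hJ h hh x).2 (by rintro v ⟨lam, rfl⟩; exact hu lam)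
  have Jmono : ∀ h : ℝ, 0 < h → ∀ x y : X, x ≤ y → J h x ≤ J h y :=
    fun h hh x y hxy => Jlub h hh x _ fun lam =>
      (hmono lam h hh.le x y hxy).trans (Jub h hh lam y)
  have Jmerge : ∀ a b : ℝ, 0 < a → 0 < b → ∀ x : X, J (a + b) x ≤ J a (J b x) := by
    intro a b ha hb x
    apply Jlub (a + b) (by linarith) x
    intro lam
    rw [hsg lam b a hb.le ha.le x]
    exact (hmono lam a ha.le _ _ (Jub b hb lam x)).trans (Jub a ha lam _)
  have Jconv : ∀ h : ℝ, 0 < h → ∀ x y : X, ∀ a : ℝ, 0 ≤ a → a ≤ 1 →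
      J h (a • x + (1 - a) • y) ≤ a • J h x + (1 - a) • J h y := by
    intro h hh x y a ha ha1
    apply Jlub h hh _ _
    intro lam
    exact (hconv lam h hh.le x y a ha ha1).trans
      (add_le_add (smul_le_smul_of_nonneg_left (Jub h hh lam x) ha)
        (smul_le_smul_of_nonneg_left (Jub h hh lam y) (by linarith)))
  -- properties of iterates
  have iter_mono : ∀ l : List ℝ, (∀ h ∈ l, 0 < h) → ∀ x y : X, x ≤ y →
      nisioIter J l x ≤ nisioIter J l y := by
    intro l
    induction l with
    | nil => intro _ x y h; exact h
    | cons h t iht =>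
      intro hl x y hxy
      exact Jmono h (hl h (by simp)) _ _ (iht (fun g hg => hl g (by simp [hg])) x y hxy)
  have iter_conv : ∀ l : List ℝ, (∀ h ∈ l, 0 < h) → ∀ x y : X, ∀ a : ℝ, 0 ≤ a → a ≤ 1 →
      nisioIter J l (a • x + (1 - a) • y) ≤ a • nisioIter J l x + (1 - a) • nisioIter J l y := by
    intro l
    induction l with
    | nil => intro _ x y a _ _; exact le_rfl
    | cons h t iht =>
      intro hl x y a ha ha1
      have hh : 0 < h := hl h (by simp)
      have hlt : ∀ g ∈ t, 0 < g := fun g hg => hl g (by simp [hg])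
      calc nisioIter J (h :: t) (a • x + (1 - a) • y)
          = J h (nisioIter J t (a • x + (1 - a) • y)) := rfl
        _ ≤ J h (a • nisioIter J t x + (1 - a) • nisioIter J t y) :=
            Jmono h hh _ _ (iht hlt x y a ha ha1)
        _ ≤ a • J h (nisioIter J t x) + (1 - a) • J h (nisioIter J t y) :=
            Jconv h hh _ _ a ha ha1
  have iter_lower : ∀ l : List ℝ, (∀ h ∈ l, 0 < h) → ∀ x : X,
      Sf l₀ l.sum x ≤ nisioIter J l x := by
    intro l
    induction l with
    | nil => intro _ x; exact le_of_eq (hid l₀ x)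
    | cons h t iht =>
      intro hl x
      have hh : 0 < h := hl h (by simp)
      have hlt : ∀ g ∈ t, 0 < g := fun g hg => hl g (by simp [hg])
      have hts : 0 ≤ t.sum := List.sum_nonneg fun g hg => (hlt g hg).le
      calc Sf l₀ (h :: t).sum x = Sf l₀ (h + t.sum) x := by rw [List.sum_cons]
        _ = Sf l₀ h (Sf l₀ t.sum x) := hsg l₀ t.sum h hts hh.le x
        _ ≤ Sf l₀ h (nisioIter J t x) := hmono l₀ h hh.le _ _ (iht hlt x)
        _ ≤ J h (nisioIter J t x) := Jub h hh l₀ _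
  -- LUB interface for Senv
  have le_Senv : ∀ t : ℝ, 0 ≤ t → ∀ (x : X) (l : List ℝ), (∀ h ∈ l, 0 < h) → l.sum = t →
      nisioIter J l x ≤ Senv t x := fun t ht x l h1 h2 => (hSenv t ht x).1 ⟨l, h1, h2, rfl⟩
  have Senv_le : ∀ t : ℝ, 0 ≤ t → ∀ (x u : X),
      (∀ l : List ℝ, (∀ h ∈ l, 0 < h) → l.sum = t → nisioIter J l x ≤ u) → Senv t x ≤ u :=
    fun t ht x u hu => (hSenv t ht x).2 (by rintro v ⟨l, h1, h2, rfl⟩; exact hu l h1 h2)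
  -- part (b)
  have partb : ∀ (lam : Λ) (t : ℝ), 0 ≤ t → ∀ x : X, Sf lam t x ≤ Senv t x := by
    intro lam t ht x
    rcases eq_or_lt_of_le ht with h0 | h0
    · rw [← h0, hid lam x]
      exact le_Senv 0 le_rfl x [] (by simp) (by simp)
    · exact (Jub t h0 lam x).trans (le_Senv t ht x [t] (by simpa using h0) (by simp))
  have Senv0 : ∀ x : X, Senv 0 x = x := by
    intro x
    refine le_antisymm (Senv_le 0 le_rfl x x ?_) (le_Senv 0 le_rfl x [] (by simp) (by simp))
    intro l h1 h2
    have : l = [] := by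
      cases l with
      | nil => rfl
      | cons h t =>
        exfalso
        have hh := h1 h (by simp)
        have hts : 0 ≤ t.sum := List.sum_nonneg fun g hg => (h1 g (by simp [hg])).le
        rw [List.sum_cons] at h2
        linarith
    subst this
    exact le_rfl
  have Senv_le_C : ∀ t : ℝ, 0 ≤ t → ∀ x : X, Senv t x ≤ C t x :=
    fun t ht x => Senv_le t ht x _ fun l h1 h2 => hCbound t ht l h1 h2 x
  -- norm sandwich
  have sandw : ∀ a b c : X, a ≤ b → b ≤ c → ‖b‖ ≤ ‖a‖ + ‖c‖ := by
    intro a b c hab hbc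
    have habs : |b| ≤ |a| + |c| := by
      rw [abs_le']
      constructor
      · exact hbc.trans ((le_abs_self c).trans (le_add_of_nonneg_left (abs_nonneg a)))
      · exact (neg_le_neg hab).trans ((neg_le_abs a).trans (le_add_of_nonneg_right (abs_nonneg c)))
    calc ‖b‖ = ‖|b|‖ := (norm_abs_eq_norm b).symm
      _ ≤ ‖|a| + |c|‖ := by
          apply HasSolidNorm.solid
          rw [abs_abs, abs_of_nonneg (add_nonneg (abs_nonneg a) (abs_nonneg c))]
          exact habs
      _ ≤ ‖|a|‖ + ‖|c|‖ := norm_add_le _ _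
      _ = ‖a‖ + ‖c‖ := by rw [norm_abs_eq_norm, norm_abs_eq_norm]
  -- J is bounded on bounded sets
  have Jbdd : ∀ h : ℝ, 0 < h → ∀ r : ℝ, 0 < r → ∃ M : ℝ, ∀ x : X, ‖x‖ ≤ r → ‖J h x‖ ≤ M := by
    intro h hh r hr
    obtain ⟨M₁, hM₁⟩ := hbdd l₀ h hh.le r hr
    obtain ⟨M₂, hM₂⟩ := hCbdd h hh.le r hr
    refine ⟨M₁ + M₂, fun x hx => ?_⟩
    have h1 : Sf l₀ h x ≤ J h x := Jub h hh l₀ x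
    have h2 : J h x ≤ C h x := hCbound h hh.le [h] (by simpa using hh) (by simp) x
    exact (sandw _ _ _ h1 h2).trans (add_le_add (hM₁ x hx) (hM₂ x hx))
  have iter_bdd : ∀ l : List ℝ, (∀ h ∈ l, 0 < h) → ∀ r : ℝ, 0 < r →
      ∃ M : ℝ, ∀ x : X, ‖x‖ ≤ r → ‖nisioIter J l x‖ ≤ M := by
    intro l
    induction l with
    | nil => intro _ r hr; exact ⟨r, fun x hx => hx⟩
    | cons h t iht =>
      intro hl r hr
      have hh : 0 < h := hl h (by simp)
      have hlt : ∀ g ∈ t, 0 < g := fun g hg => hl g (by simp [hg])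
      obtain ⟨Mt, hMt⟩ := iht hlt r hr
      have hMt' : 0 < max Mt r := lt_of_lt_of_le hr (le_max_right _ _)
      obtain ⟨MJ, hMJ⟩ := Jbdd h hh (max Mt r) hMt'
      exact ⟨MJ, fun x hx => hMJ _ ((hMt x hx).trans (le_max_left _ _))⟩
  have iter_uc : ∀ l : List ℝ, (∀ h ∈ l, 0 < h) → ∀ R ε : ℝ, 0 < R → 0 < ε →
      ∃ δ : ℝ, 0 < δ ∧ ∀ y z : X, ‖y‖ ≤ R → ‖z‖ ≤ R → ‖z - y‖ ≤ δ →
        ‖nisioIter J l z - nisioIter J l y‖ ≤ ε := by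
    intro l
    induction l with
    | nil => intro _ R ε hR hε; exact ⟨ε, hε, fun y z _ _ hzy => hzy⟩
    | cons h t iht =>
      intro hl R ε hR hε
      have hh : 0 < h := hl h (by simp)
      have hlt : ∀ g ∈ t, 0 < g := fun g hg => hl g (by simp [hg])
      obtain ⟨Mt, hMt⟩ := iter_bdd t hlt R hR
      have hR' : (0 : ℝ) < max Mt 1 := lt_of_lt_of_le one_pos (le_max_right _ _)
      obtain ⟨δ₁, hδ₁, hU⟩ := convex_bdd_cont (J h)
        (fun x y a ha ha1 => Jconv h hh x y a ha ha1) (Jbdd h hh) (max Mt 1) ε hR' hε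
      obtain ⟨δ₂, hδ₂, hT⟩ := iht hlt R δ₁ hR hδ₁
      refine ⟨δ₂, hδ₂, fun y z hy hz hzy => ?_⟩
      exact hU (nisioIter J t y) (nisioIter J t z)
        ((hMt y hy).trans (le_max_left _ _)) ((hMt z hz).trans (le_max_left _ _))
        (hT y z hy hz hzy)
  -- approximation order lemma
  have le_of_eps : ∀ u v : X, (∀ ε : ℝ, 0 < ε → ∃ w : X, u - v ≤ w ∧ ‖w‖ ≤ ε) → u ≤ v := by
    intro u v hw
    have hkey : ∀ ε : ℝ, 0 < ε → ‖(u - v)⁺‖ ≤ ε := by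
      intro ε hε
      obtain ⟨w, hw1, hw2⟩ := hw ε hε
      have h1 : (u - v)⁺ ≤ w⁺ := posPart_mono hw1
      have h2 : ‖(u - v)⁺‖ ≤ ‖w⁺‖ := HasSolidNorm.solid (by
        rw [abs_of_nonneg (posPart_nonneg _), abs_of_nonneg (posPart_nonneg _)]
        exact h1)
      have h3 : ‖w⁺‖ ≤ ‖w‖ := HasSolidNorm.solid (by
        rw [abs_of_nonneg (posPart_nonneg _)]
        exact (le_add_of_nonneg_right (negPart_nonneg w)).trans_eq (posPart_add_negPart w))
      exact (h2.trans h3).trans hw2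
    have h0 : ‖(u - v)⁺‖ ≤ 0 :=
      le_of_forall_pos_le_add fun ε hε => by simpa using hkey ε hε
    have : (u - v)⁺ = 0 := by
      simpa [norm_eq_zero] using le_antisymm h0 (norm_nonneg _)
    exact sub_nonpos.mp (posPart_eq_zero.mp this)
  -- splitting of a partition at an intermediate time
  have hsplit : ∀ l : List ℝ, (∀ h ∈ l, 0 < h) → ∀ s : ℝ, 0 ≤ s → s ≤ l.sum →
      ∃ l₁ l₂ : List ℝ, (∀ h ∈ l₁, 0 < h) ∧ (∀ h ∈ l₂, 0 < h) ∧
        l₁.sum = l.sum - s ∧ l₂.sum = s ∧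
        ∀ x : X, nisioIter J l x ≤ nisioIter J l₁ (nisioIter J l₂ x) := by
    intro l
    induction l with
    | nil =>
      intro _ s hs hsle
      rw [List.sum_nil] at hsle
      have : s = 0 := le_antisymm hsle hs
      subst this
      exact ⟨[], [], by simp, by simp, by simp, by simp, fun x => le_rfl⟩
    | cons h t iht =>
      intro hl s hs hsle
      have hh : 0 < h := hl h (by simp)
      have hlt : ∀ g ∈ t, 0 < g := fun g hg => hl g (by simp [hg])
      have hts : 0 ≤ t.sum := List.sum_nonneg fun g hg => (hlt g hg).le
      rw [List.sum_cons] at hsle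
      by_cases hcase : s ≤ t.sum
      · obtain ⟨l₁, l₂, p1, p2, p3, p4, p5⟩ := iht hlt s hs hcase
        refine ⟨h :: l₁, l₂, ?_, p2, ?_, p4, ?_⟩
        · intro g hg
          rcases List.mem_cons.mp hg with h1 | h1
          · exact h1 ▸ hh
          · exact p1 g h1
        · rw [List.sum_cons, p3, List.sum_cons]; ring
        · intro x
          exact Jmono h hh _ _ (p5 x)
      · push_neg at hcase
        by_cases heq : s = h + t.sum
        · refine ⟨[], h :: t, by simp, hl, ?_, ?_, fun x => le_rfl⟩
          · rw [List.sum_nil, List.sum_cons]; linarith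
          · rw [List.sum_cons]; linarith
        · have hlt2 : s - t.sum < h := by
            have : s < h + t.sum := lt_of_le_of_ne hsle heq
            linarith
          have hpos2 : 0 < s - t.sum := by linarith
          have hpos1 : 0 < h - (s - t.sum) := by linarith
          refine ⟨[h - (s - t.sum)], (s - t.sum) :: t, ?_, ?_, ?_, ?_, ?_⟩
          · intro g hg
            simp at hg
            rw [hg]
            exact hpos1
          · intro g hg
            rcases List.mem_cons.mp hg with h1 | h1
            · exact h1 ▸ hpos2
            · exact hlt g h1
          · simp [List.sum_cons]; ring
          · rw [List.sum_cons]; ring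
          · intro x
            have heq2 : h = (h - (s - t.sum)) + (s - t.sum) := by ring
            calc nisioIter J (h :: t) x = J h (nisioIter J t x) := rfl
              _ = J ((h - (s - t.sum)) + (s - t.sum)) (nisioIter J t x) := by rw [← heq2]
              _ ≤ J (h - (s - t.sum)) (J (s - t.sum) (nisioIter J t x)) :=
                  Jmerge _ _ hpos1 hpos2 _
              _ = nisioIter J [h - (s - t.sum)] (nisioIter J ((s - t.sum) :: t) x) := rfl
  -- the semigroup property
  have sg : ∀ s t : ℝ, 0 ≤ s → 0 ≤ t → ∀ x : X, Senv (t + s) x = Senv t (Senv s x) := by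
    intro s t hs ht x
    apply le_antisymm
    · apply Senv_le (t + s) (by linarith) x
      intro l h1 h2
      obtain ⟨l₁, l₂, p1, p2, p3, p4, p5⟩ := hsplit l h1 s hs (by rw [h2]; linarith)
      have hsum₁ : l₁.sum = t := by rw [p3, h2]; ring
      calc nisioIter J l x ≤ nisioIter J l₁ (nisioIter J l₂ x) := p5 x
        _ ≤ nisioIter J l₁ (Senv s x) := iter_mono l₁ p1 _ _ (le_Senv s hs x l₂ p2 p4)
        _ ≤ Senv t (Senv s x) := le_Senv t ht (Senv s x) l₁ p1 hsum₁
    · apply Senv_le t ht (Senv s x)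
      intro l₁ h1 h2
      apply le_of_eps
      intro ε hε
      set K : ℝ := ‖Sf l₀ s x‖ + ‖C s x‖ with hKdef
      have hK0 : 0 ≤ K := add_nonneg (norm_nonneg _) (norm_nonneg _)
      have hmemnorm : ∀ l₂ : List ℝ, (∀ g ∈ l₂, 0 < g) → l₂.sum = s →
          ‖nisioIter J l₂ x‖ ≤ K := by
        intro l₂ q1 q2
        have hlow : Sf l₀ s x ≤ nisioIter J l₂ x := by
          have := iter_lower l₂ q1 x
          rwa [q2] at this
        exact sandw _ _ _ hlow (hCbound s hs l₂ q1 q2 x)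
      have hbnorm : ‖Senv s x‖ ≤ K := sandw _ _ _ (partb l₀ s hs x) (Senv_le_C s hs x)
      obtain ⟨δ, hδ, hUC⟩ := iter_uc l₁ h1 (K + 1) ε (by linarith) hε
      -- the set over which Senv s x is a sup
      have hne' : {v : X | ∃ l : List ℝ, (∀ h ∈ l, 0 < h) ∧ l.sum = s ∧
          v = nisioIter J l x}.Nonempty := by
        rcases eq_or_lt_of_le hs with h0 | h0
        · exact ⟨x, [], by simp, by simp [← h0], rfl⟩
        · exact ⟨J s x, [s], by simpa using h0, by simp, rfl⟩
      have hdir' : ∀ u ∈ {v : X | ∃ l : List ℝ, (∀ h ∈ l, 0 < h) ∧ l.sum = s ∧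
            v = nisioIter J l x},
          ∀ w ∈ {v : X | ∃ l : List ℝ, (∀ h ∈ l, 0 < h) ∧ l.sum = s ∧
            v = nisioIter J l x},
          ∃ z ∈ {v : X | ∃ l : List ℝ, (∀ h ∈ l, 0 < h) ∧ l.sum = s ∧
            v = nisioIter J l x}, u ≤ z ∧ w ≤ z := by
        rintro u ⟨lu, pu1, pu2, rfl⟩ w ⟨lw, pw1, pw2, rfl⟩
        obtain ⟨m, m1, m2, m3⟩ := exists_refinement J Jmono Jmerge
          (lu.length + lw.length) lu lw le_rfl pu1 pw1 (by rw [pu2, pw2])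
        exact ⟨nisioIter J m x, ⟨m, m1, by rw [m2, pu2], rfl⟩, (m3 x).1, (m3 x).2⟩
      obtain ⟨v, hvmem, hvnorm⟩ := directed_sup_norm_approx hDedC hoc _ hne' hdir'
        (Senv s x) (hSenv s hs x) δ hδ
      obtain ⟨l₂, q1, q2, rfl⟩ := hvmem
      refine ⟨nisioIter J l₁ (Senv s x) - nisioIter J l₁ (nisioIter J l₂ x), ?_, ?_⟩
      · have hmem : nisioIter J (l₁ ++ l₂) x ≤ Senv (t + s) x := by
          apply le_Senv (t + s) (by linarith) x (l₁ ++ l₂)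
          · intro g hg
            rcases List.mem_append.mp hg with hga | hgb
            · exact h1 g hga
            · exact q1 g hgb
          · rw [List.sum_append, h2, q2]
        rw [nisioIter_append] at hmem
        exact sub_le_sub_left hmem _
      · exact hUC (nisioIter J l₂ x) (Senv s x)
          ((hmemnorm l₂ q1 q2).trans (by linarith))
          (hbnorm.trans (by linarith)) hvnorm
  -- assemble the conclusion
  refine ⟨⟨fun t ht => ⟨?_, ?_, ?_⟩, Senv0, sg⟩, partb, ?_, ?_, ?_⟩
  · -- (a) convexity
    intro x y a ha ha1
    apply Senv_le t ht _ _
    intro l h1 h2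
    exact (iter_conv l h1 x y a ha ha1).trans
      (add_le_add (smul_le_smul_of_nonneg_left (le_Senv t ht x l h1 h2) ha)
        (smul_le_smul_of_nonneg_left (le_Senv t ht y l h1 h2) (by linarith)))
  · -- (a) monotonicity
    intro x y hxy
    apply Senv_le t ht x _
    intro l h1 h2
    exact (iter_mono l h1 x y hxy).trans (le_Senv t ht y l h1 h2)
  · -- (a) boundedness
    intro r hr
    obtain ⟨M₁, hM₁⟩ := hbdd l₀ t ht r hr
    obtain ⟨M₂, hM₂⟩ := hCbdd t ht r hr
    refine ⟨M₁ + M₂, fun x hx => ?_⟩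
    exact (sandw _ _ _ (partb l₀ t ht x) (Senv_le_C t ht x)).trans
      (add_le_add (hM₁ x hx) (hM₂ x hx))
  · -- (c) minimality
    intro T Tbdd T0 Tsg Tdom t ht x
    have key : ∀ l : List ℝ, (∀ h ∈ l, 0 < h) → ∀ x : X, nisioIter J l x ≤ T l.sum x := by
      intro l
      induction l with
      | nil => intro _ x; exact le_of_eq (T0 x).symm
      | cons h u ihu =>
        intro hl x
        have hh : 0 < h := hl h (by simp)
        have hlu : ∀ g ∈ u, 0 < g := fun g hg => hl g (by simp [hg])
        have hus : 0 ≤ u.sum := List.sum_nonneg fun g hg => (hlu g hg).le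
        calc nisioIter J (h :: u) x = J h (nisioIter J u x) := rfl
          _ ≤ J h (T u.sum x) := Jmono h hh _ _ (ihu hlu x)
          _ ≤ T h (T u.sum x) := Jlub h hh _ _ fun lam =>
              (hmono lam h hh.le _ _ (le_rfl)).trans (Tdom lam h hh.le _) |>.trans le_rfl
          _ = T (h + u.sum) x := (Tsg u.sum h hus hh.le x).symm
          _ = T (h :: u).sum x := by rw [List.sum_cons]
    apply Senv_le t ht x
    intro l h1 h2
    exact (key l h1 x).trans (le_of_eq (by rw [h2]))
  · -- (d) strong continuity
    intro hC hS0 x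
    obtain ⟨lam₀, hlam₀⟩ := hS0
    rw [tendsto_iff_norm_sub_tendsto_zero]
    have hCx := tendsto_iff_norm_sub_tendsto_zero.mp (hC x)
    have hSx := tendsto_iff_norm_sub_tendsto_zero.mp (hlam₀ x)
    apply squeeze_zero' (Eventually.of_forall fun t => norm_nonneg _)
    · filter_upwards [self_mem_nhdsWithin] with t ht
      have ht' : (0 : ℝ) ≤ t := (Set.mem_Ioi.mp ht).le
      exact sandw _ _ _ (sub_le_sub_right (partb lam₀ t ht' x) x)
        (sub_le_sub_right (Senv_le_C t ht' x) x)
    · simpa using hSx.add hCx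
  · -- (e) positive homogeneity
    intro hhom t ht a ha x
    have Jhom : ∀ h : ℝ, 0 < h → ∀ y : X, J h (a • y) = a • J h y := by
      intro h hh y
      apply le_antisymm
      · apply Jlub h hh _ _
        intro lam
        rw [hhom lam h hh.le a ha y]
        exact smul_le_smul_of_nonneg_left (Jub h hh lam y) ha.le
      · have hle : J h y ≤ a⁻¹ • J h (a • y) := by
          apply Jlub h hh _ _
          intro lam
          have hub := Jub h hh lam (a • y)
          rw [hhom lam h hh.le a ha y] at hub
          calc Sf lam h y = a⁻¹ • (a • Sf lam h y) := (inv_smul_smul₀ ha.ne' _).symm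
            _ ≤ a⁻¹ • J h (a • y) :=
                smul_le_smul_of_nonneg_left hub (by positivity)
        calc a • J h y ≤ a • (a⁻¹ • J h (a • y)) :=
              smul_le_smul_of_nonneg_left hle ha.le
          _ = J h (a • y) := smul_inv_smul₀ ha.ne' _
    have iter_hom : ∀ l : List ℝ, (∀ h ∈ l, 0 < h) → ∀ y : X,
        nisioIter J l (a • y) = a • nisioIter J l y := by
      intro l
      induction l with
      | nil => intro _ y; rfl
      | cons h u ihu =>
        intro hl y
        have hh : 0 < h := hl h (by simp)
        have hlu : ∀ g ∈ u, 0 < g := fun g hg => hl g (by simp [hg])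
        calc nisioIter J (h :: u) (a • y) = J h (nisioIter J u (a • y)) := rfl
          _ = J h (a • nisioIter J u y) := by rw [ihu hlu y]
          _ = a • J h (nisioIter J u y) := Jhom h hh _
    apply le_antisymm
    · apply Senv_le t ht (a • x) _
      intro l h1 h2
      rw [iter_hom l h1 x]
      exact smul_le_smul_of_nonneg_left (le_Senv t ht x l h1 h2) ha.le
    · have hle : Senv t x ≤ a⁻¹ • Senv t (a • x) := by
        apply Senv_le t ht x _
        intro l h1 h2
        have hub := le_Senv t ht (a • x) l h1 h2
        rw [iter_hom l h1 x] at hub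
        calc nisioIter J l x = a⁻¹ • (a • nisioIter J l x) := (inv_smul_smul₀ ha.ne' _).symm
          _ ≤ a⁻¹ • Senv t (a • x) := smul_le_smul_of_nonneg_left hub (by positivity)
      calc a • Senv t x ≤ a • (a⁻¹ • Senv t (a • x)) :=
            smul_le_smul_of_nonneg_left hle ha.le
        _ = Senv t (a • x) := smul_inv_smul₀ ha.ne' _
end

section
/- Fix p ∈ [1,∞) and define f : ℝ → ℝ by f(x) = |x|^{−1/(2p)} for 0 < |x| ≤ 1 and f(x) = 0 otherwise. Then f ∈ L^p(ℝ), but for every t > 0 the set {f(· + tλ) : λ ∈ [−1,1]} has no upper bound in the Banach lattice L^p(ℝ): there exists no g ∈ L^p(ℝ) such that for every λ ∈ [−1,1] one has f(x + tλ) ≤ g(x) for almost every x ∈ ℝ. In particular, this family of translates has no least upper bound in L^p(ℝ). -/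
open MeasureTheory Filter Set
open scoped ENNReal

/-- The function `f(x) = |x|^{-1/(2p)}` for `0 < |x| ≤ 1` and `f(x) = 0` otherwise. -/
noncomputable def polePeak (p : ℝ≥0∞) : ℝ → ℝ :=
  fun x => if 0 < |x| ∧ |x| ≤ 1 then |x| ^ (-(1 / (2 * p.toReal))) else 0

lemma polePeak_measurable (p : ℝ≥0∞) : Measurable (polePeak p) := by
  unfold polePeak
  refine Measurable.ite ?_ (by fun_prop) measurable_const
  exact (measurableSet_lt measurable_const measurable_abs).inter
    (measurableSet_le measurable_abs measurable_const)

/-- For `p ∈ [1,∞)`, the function `f(x) = |x|^{-1/(2p)} 1_{0<|x|≤1}` belongs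
to `L^p(ℝ)`, but for every `t > 0` the family of translates `{f(· + tλ) : λ ∈ [−1,1]}`
has no upper bound in `L^p(ℝ)`: there is no `g ∈ L^p(ℝ)` with `f(x + tλ) ≤ g(x)` for
a.e. `x`, for every `λ ∈ [−1,1]`. In particular it has no least upper bound. -/
theorem translates_of_pole_have_no_upper_bound_in_Lp
    (p : ℝ≥0∞) (hp1 : 1 ≤ p) (hptop : p ≠ ⊤) :
    MemLp (polePeak p) p (volume : Measure ℝ) ∧
    ∀ t : ℝ, 0 < t →
      ¬ ∃ g : ℝ → ℝ, MemLp g p (volume : Measure ℝ) ∧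
        ∀ lam : ℝ, lam ∈ Icc (-1 : ℝ) 1 →
          ∀ᵐ x : ℝ, polePeak p (x + t * lam) ≤ g x := by
  have hp0 : p ≠ 0 := by
    intro h; rw [h] at hp1; exact (not_le.2 zero_lt_one) (by exact_mod_cast hp1)
  set q := p.toReal with hq
  have hq1 : 1 ≤ q := by
    have := ENNReal.toReal_mono hptop hp1
    simpa using this
  have hq0 : 0 < q := lt_of_lt_of_le one_pos hq1
  set e : ℝ := 1 / (2 * q) with he_def
  have he : 0 < e := by positivity
  have hmeas := polePeak_measurable p
  constructor
  · -- Membership in L^p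
    have hIoc1 : IntegrableOn (fun x : ℝ => |x| ^ (-(1/2) : ℝ)) (Ioc 0 1) volume := by
      have h1 : IntervalIntegrable (fun x : ℝ => x ^ (-(1/2) : ℝ)) volume 0 1 :=
        intervalIntegral.intervalIntegrable_rpow' (by norm_num)
      rw [intervalIntegrable_iff_integrableOn_Ioc_of_le zero_le_one] at h1
      exact h1.congr_fun (fun x hx => by rw [abs_of_pos hx.1]) measurableSet_Ioc
    have hIocm : IntegrableOn (fun x : ℝ => |x| ^ (-(1/2) : ℝ)) (Ioc (-1) 0) volume := by
      have h1 : IntervalIntegrable (fun x : ℝ => x ^ (-(1/2) : ℝ)) volume 0 1 :=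
        intervalIntegral.intervalIntegrable_rpow' (by norm_num)
      have h2 := (IntervalIntegrable.iff_comp_neg).mp h1
      norm_num at h2
      have h3 : IntervalIntegrable (fun x : ℝ => (-x) ^ (-(1/2) : ℝ)) volume (-1) 0 := h2.symm
      rw [intervalIntegrable_iff_integrableOn_Ioc_of_le (by norm_num : (-1:ℝ) ≤ 0)] at h3
      exact h3.congr_fun (fun x hx => by rw [abs_of_nonpos hx.2]) measurableSet_Ioc
    have hIcc : IntegrableOn (fun x : ℝ => |x| ^ (-(1/2) : ℝ)) (Icc (-1) 1) volume := by
      rw [integrableOn_Icc_iff_integrableOn_Ioc]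
      have := hIocm.union hIoc1
      rwa [Set.Ioc_union_Ioc_eq_Ioc (by norm_num) zero_le_one] at this
    set H : ℝ → ℝ := Set.indicator (Icc (-1:ℝ) 1) (fun x => |x| ^ (-(1/2) : ℝ)) with hH
    have hHint : Integrable H volume :=
      (integrable_indicator_iff measurableSet_Icc).2 hIcc
    have hbound : ∀ x : ℝ, ‖polePeak p x‖ ^ q ≤ H x := by
      intro x
      unfold polePeak
      by_cases hx : 0 < |x| ∧ |x| ≤ 1
      · have hmem : x ∈ Icc (-1:ℝ) 1 := abs_le.1 hx.2
        rw [if_pos hx, hH, Set.indicator_of_mem hmem]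
        rw [Real.norm_eq_abs, abs_of_nonneg (Real.rpow_nonneg (abs_nonneg x) _),
          ← Real.rpow_mul (abs_nonneg x)]
        apply le_of_eq
        congr 1
        rw [← hq]
        field_simp
      · rw [if_neg hx]
        simp only [norm_zero]
        rw [Real.zero_rpow hq0.ne']
        exact Set.indicator_nonneg (fun y _ => Real.rpow_nonneg (abs_nonneg y) _) x
    have hint : Integrable (fun x : ℝ => ‖polePeak p x‖ ^ q) volume := by
      have hm2 : Measurable (fun x : ℝ => ‖polePeak p x‖ ^ q) := by
        have h' : Measurable (fun y : ℝ => y ^ q) := by fun_prop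
        exact h'.comp hmeas.norm
      refine hHint.mono' hm2.aestronglyMeasurable ?_
      refine Filter.Eventually.of_forall (fun x => ?_)
      rw [Real.norm_eq_abs, abs_of_nonneg (Real.rpow_nonneg (norm_nonneg _) _)]
      exact hbound x
    refine (memLp_norm_rpow_iff (p := p) (q := p) hmeas.aestronglyMeasurable hp0 hptop).1 ?_
    rw [ENNReal.div_self hp0 hptop, memLp_one_iff_integrable]
    exact hint
  · -- No upper bound
    rintro t ht ⟨g, hg, hdom⟩
    obtain ⟨c, hc⟩ := TopologicalSpace.exists_dense_seq ℝ
    set s : ℝ := min t 1 with hs_def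
    have hs0 : 0 < s := lt_min ht one_pos
    have hst : s ≤ t := min_le_left _ _
    have hs1 : s ≤ 1 := min_le_right _ _
    set lam : ℕ → ℝ := fun n => if c n ∈ Icc (0:ℝ) s then -(c n) / t else 0 with hlam_def
    have hlam : ∀ n, lam n ∈ Icc (-1:ℝ) 1 := by
      intro n
      simp only [hlam_def]
      split
      · rename_i h
        constructor
        · rw [neg_div, neg_le, neg_neg]
          exact (div_le_one ht).2 (h.2.trans hst)
        · have hpos : 0 ≤ c n / t := div_nonneg h.1 ht.le
          rw [neg_div]; linarith
      · constructor <;> norm_num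
    have key : ∀ᵐ x : ℝ, ∀ n, polePeak p (x + t * lam n) ≤ g x :=
      ae_all_iff.2 (fun n => hdom _ (hlam n))
    have hcnull : ∀ᵐ x : ℝ, x ∉ Set.range c := by
      rw [← MeasureTheory.measure_eq_zero_iff_ae_notMem]
      exact Set.Countable.measure_zero (Set.countable_range c) _
    have hmix : ∀ᵐ x : ℝ, (∀ n, polePeak p (x + t * lam n) ≤ g x) ∧ x ∉ Set.range c :=
      key.and hcnull
    -- find a point in Ioo 0 s where both hold
    obtain ⟨x, hxI, hxP⟩ :
        ∃ x ∈ Ioo (0:ℝ) s, (∀ n, polePeak p (x + t * lam n) ≤ g x) ∧ x ∉ Set.range c := by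
      by_contra hcon
      push_neg at hcon
      have hsub : Ioo (0:ℝ) s ⊆ {x | ¬ ((∀ n, polePeak p (x + t * lam n) ≤ g x) ∧ x ∉ Set.range c)} := by
        intro x hx
        intro h
        exact h.2 (hcon x hx h.1)
      have h0 : volume (Ioo (0:ℝ) s) = 0 :=
        measure_mono_null hsub hmix
      rw [Real.volume_Ioo] at h0
      simp only [sub_zero] at h0
      rw [ENNReal.ofReal_eq_zero] at h0
      exact absurd h0 (not_le.2 hs0)
    obtain ⟨hxd, hxr⟩ := hxP
    -- choose a small ε
    set M : ℝ := max (g x) 0 + 1 with hM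
    have hM1 : 1 ≤ M := by
      have : (0:ℝ) ≤ max (g x) 0 := le_max_right _ _
      linarith
    have hM0 : 0 < M := lt_of_lt_of_le one_pos hM1
    set ε : ℝ := M ^ (-(1/e)) with hε
    have hε0 : 0 < ε := Real.rpow_pos_of_pos hM0 _
    have hε1 : ε ≤ 1 := by
      rw [hε]
      calc M ^ (-(1/e)) ≤ M ^ (0:ℝ) := by
            apply Real.rpow_le_rpow_of_exponent_le hM1
            exact neg_nonpos.2 (by positivity)
        _ = 1 := Real.rpow_zero M
    set δ : ℝ := min ε (min x (s - x)) with hδ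
    have hδ0 : 0 < δ := lt_min hε0 (lt_min hxI.1 (by linarith [hxI.2]))
    -- density gives n with c n close to x
    obtain ⟨n, hn⟩ : ∃ n, c n ∈ Metric.ball x δ := by
      exact hc.exists_mem_open Metric.isOpen_ball ⟨x, Metric.mem_ball_self hδ0⟩
    rw [Metric.mem_ball, Real.dist_eq] at hn
    have hcx : c n ≠ x := fun h => hxr ⟨n, h⟩
    have hcn_mem : c n ∈ Icc (0:ℝ) s := by
      have h1 : |c n - x| < x := lt_of_lt_of_le hn (le_trans (min_le_right _ _) (min_le_left _ _))
      have h2 : |c n - x| < s - x := lt_of_lt_of_le hn (le_trans (min_le_right _ _) (min_le_right _ _))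
      rw [abs_lt] at hn h1 h2
      constructor <;> [linarith; linarith]
    have hlamn : lam n = -(c n) / t := by rw [hlam_def]; simp [hcn_mem]
    have harg : x + t * lam n = x - c n := by
      rw [hlamn]; field_simp; ring
    have habs : 0 < |x - c n| ∧ |x - c n| ≤ 1 := by
      constructor
      · rw [abs_pos]; intro h; apply hcx; linarith [sub_eq_zero.1 h]
      · have : |x - c n| < δ := by rwa [abs_sub_comm]
        linarith [le_trans this.le (le_trans (min_le_left _ _) hε1)]
    have hval : polePeak p (x + t * lam n) = |x - c n| ^ (-e) := by
      rw [harg]; unfold polePeak; rw [if_pos habs]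
    have hεle : |x - c n| ≤ ε := by
      have : |x - c n| < δ := by rwa [abs_sub_comm]
      exact this.le.trans (min_le_left _ _)
    have hlow : ε ^ (-e) ≤ |x - c n| ^ (-e) :=
      Real.rpow_le_rpow_of_nonpos habs.1 hεle (by linarith)
    have hεval : ε ^ (-e) = M := by
      rw [hε, ← Real.rpow_mul hM0.le]
      rw [show (-(1/e)) * (-e) = 1 by field_simp]
      exact Real.rpow_one M
    have hfinal : M ≤ g x := by
      have := hxd n
      rw [hval] at this
      calc M = ε ^ (-e) := hεval.symm
        _ ≤ |x - c n| ^ (-e) := hlow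
        _ ≤ g x := this
    have : g x ≤ max (g x) 0 := le_max_left _ _
    linarith
end

section
/- Let X and Y be Banach lattices and let S : X → Y be convex and monotone. Then S is continuous. -/
open Filter Topology Set

/-- A convex monotone operator between Banach lattices is continuous. -/
theorem convex_monotone_continuous
    {X : Type*} [NormedAddCommGroup X] [Lattice X] [HasSolidNorm X]
    [IsOrderedAddMonoid X] [NormedSpace ℝ X] [CompleteSpace X]
    [PosSMulStrictMono ℝ X] [PosSMulReflectLT ℝ X]
    {Y : Type*} [NormedAddCommGroup Y] [Lattice Y] [HasSolidNorm Y]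
    [IsOrderedAddMonoid Y] [NormedSpace ℝ Y] [CompleteSpace Y]
    [PosSMulStrictMono ℝ Y] [PosSMulReflectLT ℝ Y]
    (S : X → Y)
    (hconv : ∀ x y : X, ∀ a : ℝ, 0 ≤ a → a ≤ 1 →
      S (a • x + (1 - a) • y) ≤ a • S x + (1 - a) • S y)
    (hmono : ∀ x y : X, x ≤ y → S x ≤ S y) :
    Continuous S := by
  rw [continuous_iff_continuousAt]
  intro x₀
  by_contra hc
  rw [Metric.continuousAt_iff] at hc
  push_neg at hc
  obtain ⟨ε, hε, hbad⟩ := hc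
  have hchoice : ∀ n : ℕ, ∃ x : X,
      dist x x₀ < (2 : ℝ)⁻¹ ^ n / ((n : ℝ) + 1) ^ 2 ∧ ε ≤ dist (S x) (S x₀) := by
    intro n
    obtain ⟨x, hx1, hx2⟩ := hbad ((2 : ℝ)⁻¹ ^ n / ((n : ℝ) + 1) ^ 2) (by positivity)
    exact ⟨x, hx1, hx2⟩
  choose u hu1 hu2 using hchoice
  set h : ℕ → X := fun n => u n - x₀ with hh
  have hu : ∀ n, u n = x₀ + h n := by
    intro n; simp only [hh]; abel
  have hnorm : ∀ n, ‖h n‖ ≤ (2 : ℝ)⁻¹ ^ n / ((n : ℝ) + 1) ^ 2 := by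
    intro n
    have := (hu1 n).le
    rwa [dist_eq_norm] at this
  -- the auxiliary element z
  have hsum : Summable (fun n : ℕ => (((n : ℝ) + 1) ^ 2) • |h n|) := by
    apply Summable.of_norm
    apply Summable.of_nonneg_of_le (fun n => norm_nonneg _)
      (fun n => ?_)
      (summable_geometric_of_lt_one (by norm_num) (by norm_num) :
        Summable fun n : ℕ => (2 : ℝ)⁻¹ ^ n)
    rw [norm_smul, Real.norm_eq_abs, abs_of_nonneg (by positivity)]
    calc ((n : ℝ) + 1) ^ 2 * ‖|h n|‖ = ((n : ℝ) + 1) ^ 2 * ‖h n‖ := by rw [norm_abs_eq_norm]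
      _ ≤ ((n : ℝ) + 1) ^ 2 * ((2 : ℝ)⁻¹ ^ n / ((n : ℝ) + 1) ^ 2) :=
          mul_le_mul_of_nonneg_left (hnorm n) (by positivity)
      _ = (2 : ℝ)⁻¹ ^ n := by field_simp
  set z : X := ∑' n : ℕ, (((n : ℝ) + 1) ^ 2) • |h n| with hz
  have hterm_nonneg : ∀ n : ℕ, (0 : X) ≤ (((n : ℝ) + 1) ^ 2) • |h n| := fun n =>
    smul_nonneg (by positivity) (abs_nonneg _)
  have hz_nonneg : (0 : X) ≤ z := tsum_nonneg hterm_nonneg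
  have hle_z : ∀ n : ℕ, (((n : ℝ) + 1) ^ 2) • |h n| ≤ z :=
    fun n => Summable.le_tsum hsum n (fun j _ => hterm_nonneg j)
  have habs : ∀ n : ℕ, |h n| ≤ (1 / ((n : ℝ) + 1) ^ 2) • z := by
    intro n
    have t0 : (0 : ℝ) < ((n : ℝ) + 1) ^ 2 := by positivity
    have := smul_le_smul_of_nonneg_left (hle_z n)
      (le_of_lt (by positivity : (0 : ℝ) < 1 / ((n : ℝ) + 1) ^ 2))
    have e : (1 / ((n : ℝ) + 1) ^ 2) * ((n : ℝ) + 1) ^ 2 = 1 := by field_simp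
    rwa [smul_smul, e, one_smul] at this
  set D : Y := S (x₀ + z) - S x₀ with hD
  have hD_nonneg : (0 : Y) ≤ D := by
    rw [hD, sub_nonneg]
    exact hmono _ _ (le_add_of_nonneg_right hz_nonneg)
  -- convexity auxiliary inequality
  have conv_aux : ∀ a : ℝ, 0 ≤ a → a ≤ 1 → S (x₀ + a • z) ≤ S x₀ + a • D := by
    intro a ha0 ha1
    have e1 : x₀ + a • z = a • (x₀ + z) + (1 - a) • x₀ := by module
    rw [e1]
    calc S (a • (x₀ + z) + (1 - a) • x₀) ≤ a • S (x₀ + z) + (1 - a) • S x₀ :=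
          hconv _ _ a ha0 ha1
      _ = S x₀ + a • D := by rw [hD]; module
  -- main estimate
  have key : ∀ n : ℕ, ‖S (u n) - S x₀‖ ≤ 1 / ((n : ℝ) + 1) * ‖D‖ := by
    intro n
    set t : ℝ := (n : ℝ) + 1 with ht
    have ht1 : (1 : ℝ) ≤ t := by simp [ht]
    have ht0 : (0 : ℝ) < t := lt_of_lt_of_le one_pos ht1
    have htne : t ≠ 0 := ne_of_gt ht0
    have ht10 : (0 : ℝ) < t + 1 := by linarith
    have ht1ne : t + 1 ≠ 0 := ne_of_gt ht10
    have hinv1 : (0 : ℝ) ≤ 1 / t := by positivity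
    have hinvle : 1 / t ≤ 1 := by rw [div_le_one ht0]; linarith
    have hsq_le : (1 / t ^ 2) • z ≤ (1 / t) • z := by
      apply smul_le_smul_of_nonneg_right _ hz_nonneg
      rw [div_le_div_iff₀ (by positivity) ht0]
      nlinarith
    have habs' : |h n| ≤ (1 / t) • z := le_trans (habs n) hsq_le
    set A : Y := S (u n) with hA
    set B : Y := S x₀ with hB
    -- upper bound
    have hupper : A - B ≤ (1 / t) • D := by
      have h1 : u n ≤ x₀ + (1 / t) • z := by
        rw [hu n]
        exact add_le_add_right (le_trans (le_abs_self _) habs') x₀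
      have h2 : A ≤ B + (1 / t) • D :=
        le_trans (hmono _ _ h1) (conv_aux (1 / t) hinv1 hinvle)
      rwa [sub_le_iff_le_add']
    -- lower bound
    have hlower : -((1 / t) • D) ≤ A - B := by
      have hw_le : x₀ - t • h n ≤ x₀ + (1 / t) • z := by
        have h3 : -(h n) ≤ |h n| := neg_le_abs _
        have h4 : t • (-(h n)) ≤ t • |h n| :=
          smul_le_smul_of_nonneg_left h3 (le_of_lt ht0)
        have h5 : t • |h n| ≤ (1 / t) • z := by
          have := smul_le_smul_of_nonneg_left (habs n) (le_of_lt ht0)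
          rwa [smul_smul, show t * (1 / t ^ 2) = 1 / t by field_simp] at this
        calc x₀ - t • h n = x₀ + t • (-(h n)) := by module
          _ ≤ x₀ + t • |h n| := add_le_add_right h4 x₀
          _ ≤ x₀ + (1 / t) • z := add_le_add_right h5 x₀
      have hSw : S (x₀ - t • h n) ≤ B + (1 / t) • D :=
        le_trans (hmono _ _ hw_le) (conv_aux (1 / t) hinv1 hinvle)
      have ha0 : (0 : ℝ) ≤ t / (t + 1) := by positivity
      have ha1 : t / (t + 1) ≤ 1 := by rw [div_le_one ht10]; linarith
      have e2 : x₀ = (t / (t + 1)) • (u n) + (1 - t / (t + 1)) • (x₀ - t • h n) := by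
        rw [hu n]
        match_scalars <;> (field_simp <;> ring)
      have hcomb : B ≤ (t / (t + 1)) • A + (1 - t / (t + 1)) • S (x₀ - t • h n) := by
        have h5' := hconv (u n) (x₀ - t • h n) (t / (t + 1)) ha0 ha1
        rwa [← e2] at h5'
      have hfin : B ≤ (t / (t + 1)) • A + (1 - t / (t + 1)) • (B + (1 / t) • D) :=
        le_trans hcomb (add_le_add_right
          (smul_le_smul_of_nonneg_left hSw (by linarith : (0:ℝ) ≤ 1 - t / (t + 1))) _)
      have h6 := smul_le_smul_of_nonneg_left hfin (le_of_lt ht10)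
      rw [smul_add, smul_smul, smul_smul,
        show (t + 1) * (t / (t + 1)) = t by field_simp <;> ring,
        show (t + 1) * (1 - t / (t + 1)) = 1 by field_simp <;> ring, one_smul] at h6
      -- h6 : (t+1) • B ≤ t • A + (B + (1/t) • D)
      have h7 : t • B ≤ t • A + (1 / t) • D := by
        calc t • B = (t + 1) • B - B := by module
          _ ≤ (t • A + (B + (1 / t) • D)) - B := sub_le_sub_right h6 B
          _ = t • A + (1 / t) • D := by abel
      have h8 := smul_le_smul_of_nonneg_left h7 hinv1
      rw [smul_add, smul_smul, smul_smul, smul_smul,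
        show (1 / t) * t = 1 by field_simp, one_smul, one_smul] at h8
      -- h8 : B ≤ A + ((1/t)*(1/t)) • D
      have hsq2 : ((1 / t) * (1 / t)) • D ≤ (1 / t) • D := by
        apply smul_le_smul_of_nonneg_right _ hD_nonneg
        nlinarith
      have h9 : B ≤ A + (1 / t) • D := le_trans h8 (add_le_add_right hsq2 A)
      have h10 : B - A ≤ (1 / t) • D := by rwa [sub_le_iff_le_add']
      have := neg_le_neg h10
      rwa [neg_sub] at this
    have habsle : |A - B| ≤ (1 / t) • D := abs_le'.2 ⟨hupper, neg_le.2 hlower⟩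
    have hsolid : ‖A - B‖ ≤ ‖(1 / t) • D‖ := by
      apply HasSolidNorm.solid
      rwa [abs_of_nonneg (smul_nonneg hinv1 hD_nonneg)]
    calc ‖A - B‖ ≤ ‖(1 / t) • D‖ := hsolid
      _ = 1 / t * ‖D‖ := by rw [norm_smul, Real.norm_eq_abs, abs_of_nonneg hinv1]
  -- conclusion
  obtain ⟨n, hn⟩ := exists_nat_gt (‖D‖ / ε)
  have h1 := key n
  have h2 := hu2 n
  rw [dist_eq_norm] at h2
  have hεn : ε ≤ 1 / ((n : ℝ) + 1) * ‖D‖ := le_trans h2 h1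
  have hn1 : (0 : ℝ) < (n : ℝ) + 1 := by positivity
  rw [div_mul_eq_mul_div, one_mul, le_div_iff₀ hn1] at hεn
  have hDlt : ‖D‖ < (n : ℝ) * ε := (div_lt_iff₀ hε).1 hn
  nlinarith
end

section
/- Let X and Y be Banach lattices and let 𝒮 be a family of convex continuous operators X → Y such that sup_{S∈𝒮} ‖S(x)‖ < ∞ for every x ∈ X. Then: (i) there exists r > 0 such that sup_{S∈𝒮} sup_{‖x‖≤r} ‖S(x)‖ < ∞; (ii) for every x₀ ∈ X there exists r > 0 such that sup over all S ∈ 𝒮, all x with ‖x − x₀‖ ≤ r, and all y with ‖y‖ ≤ r of ‖S(x+y) − S(x)‖ is finite. -/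
open Filter Topology Set

lemma sandwich_norm {Y : Type*} [NormedAddCommGroup Y] [Lattice Y] [IsOrderedAddMonoid Y]
    [HasSolidNorm Y] {a b c : Y}
    (h1 : a ≤ b) (h2 : b ≤ c) : ‖b‖ ≤ ‖a‖ + ‖c‖ := by
  have habs : |b| ≤ |a| + |c| := by
    rw [abs_le']
    constructor
    · calc b ≤ c := h2
        _ ≤ |c| := le_abs_self c
        _ ≤ |a| + |c| := le_add_of_nonneg_left (abs_nonneg a)
    · calc -b ≤ -a := neg_le_neg h1
        _ ≤ |a| := neg_le_abs a
        _ ≤ |a| + |c| := le_add_of_nonneg_right (abs_nonneg c)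
  calc ‖b‖ ≤ ‖|a| + |c|‖ := by
        apply HasSolidNorm.solid
        rwa [abs_of_nonneg (add_nonneg (abs_nonneg a) (abs_nonneg c))]
    _ ≤ ‖|a|‖ + ‖|c|‖ := norm_add_le _ _
    _ = ‖a‖ + ‖c‖ := by rw [norm_abs_eq_norm, norm_abs_eq_norm]

/-- Uniform boundedness principle for families of convex continuous
operators between Banach lattices: if `sup_{S∈𝒮} ‖S(x)‖ < ∞` for every `x`, then
(i) the family is uniformly bounded on some ball `B(0,r)`, and (ii) around every point
`x₀` the increments `S(x+y) − S(x)` are uniformly bounded for `x ∈ B(x₀,r)`,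
`y ∈ B(0,r)` for some `r > 0`. -/
theorem convex_uniform_boundedness
    {X : Type*} [NormedAddCommGroup X] [Lattice X] [IsOrderedAddMonoid X] [HasSolidNorm X]
    [NormedSpace ℝ X] [CompleteSpace X]
    [PosSMulStrictMono ℝ X] [PosSMulReflectLT ℝ X]
    {Y : Type*} [NormedAddCommGroup Y] [Lattice Y] [IsOrderedAddMonoid Y] [HasSolidNorm Y]
    [NormedSpace ℝ Y] [CompleteSpace Y]
    [PosSMulStrictMono ℝ Y] [PosSMulReflectLT ℝ Y]
    {ι : Type*} (𝒮 : ι → X → Y)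
    (hconv : ∀ i : ι, ∀ x y : X, ∀ a : ℝ, 0 ≤ a → a ≤ 1 →
      𝒮 i (a • x + (1 - a) • y) ≤ a • 𝒮 i x + (1 - a) • 𝒮 i y)
    (hcont : ∀ i : ι, Continuous (𝒮 i))
    (hptbdd : ∀ x : X, ∃ M : ℝ, ∀ i : ι, ‖𝒮 i x‖ ≤ M) :
    (∃ r : ℝ, 0 < r ∧ ∃ M : ℝ, ∀ i : ι, ∀ x : X, ‖x‖ ≤ r → ‖𝒮 i x‖ ≤ M) ∧
    (∀ x₀ : X, ∃ r : ℝ, 0 < r ∧ ∃ M : ℝ, ∀ i : ι, ∀ x y : X,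
      ‖x - x₀‖ ≤ r → ‖y‖ ≤ r → ‖𝒮 i (x + y) - 𝒮 i x‖ ≤ M) := by
  -- Baire category argument
  set E : ℕ → Set X := fun n => {x | ∀ i, ‖𝒮 i x‖ ≤ n} with hE
  have hclosed : ∀ n, IsClosed (E n) := by
    intro n
    have : E n = ⋂ i, (fun x => ‖𝒮 i x‖) ⁻¹' (Iic (n : ℝ)) := by
      ext x; simp [hE, mem_iInter]
    rw [this]
    exact isClosed_iInter fun i => IsClosed.preimage ((hcont i).norm) isClosed_Iic
  have hcover : ⋃ n, E n = univ := by
    ext x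
    simp only [mem_iUnion, mem_univ, iff_true]
    obtain ⟨M, hM⟩ := hptbdd x
    obtain ⟨n, hn⟩ := exists_nat_ge M
    exact ⟨n, fun i => (hM i).trans hn⟩
  obtain ⟨n, hn⟩ := nonempty_interior_of_iUnion_of_closed hclosed hcover
  obtain ⟨x₁, hx₁⟩ := hn
  obtain ⟨ρ, hρ, hball⟩ := Metric.isOpen_iff.1 isOpen_interior x₁ hx₁
  have hbnd : ∀ z : X, ‖z - x₁‖ < ρ → ∀ i, ‖𝒮 i z‖ ≤ n := by
    intro z hz i
    have : z ∈ Metric.ball x₁ ρ := by rwa [Metric.mem_ball, dist_eq_norm]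
    exact (interior_subset (hball this)) i
  -- Key: local uniform boundedness around any point
  have key : ∀ x₀ : X, ∃ r : ℝ, 0 < r ∧ ∃ M : ℝ, ∀ i : ι, ∀ x : X,
      ‖x - x₀‖ ≤ r → ‖𝒮 i x‖ ≤ M := by
    intro x₀
    refine ⟨ρ/4, by positivity, ?_⟩
    set p : X := (2:ℝ) • x₀ - x₁ with hp
    set q : X := (2:ℝ) • x₁ - x₀ with hq
    obtain ⟨Mp, hMp⟩ := hptbdd p
    obtain ⟨Mq, hMq⟩ := hptbdd q
    refine ⟨(2*n + Mq) + (n + Mp), fun i x hx => ?_⟩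
    set w : X := (2:ℝ) • x - p with hw
    have hwball : ‖w - x₁‖ < ρ := by
      have : w - x₁ = (2:ℝ) • (x - x₀) := by
        rw [hw, hp]; module
      rw [this, norm_smul]
      simp only [Real.norm_ofNat]
      nlinarith [norm_nonneg (x - x₀)]
    set w' : X := (1/2:ℝ) • x + (1/2:ℝ) • q with hw'
    have hw'ball : ‖w' - x₁‖ < ρ := by
      have : w' - x₁ = (1/2:ℝ) • (x - x₀) := by
        rw [hw', hq]; module
      rw [this, norm_smul]
      have h12 : ‖(1/2:ℝ)‖ = 1/2 := by rw [Real.norm_eq_abs]; norm_num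
      rw [h12]
      nlinarith [norm_nonneg (x - x₀)]
    -- upper bound: x = (1/2) w + (1/2) p
    have hxcomb : x = (1/2:ℝ) • w + (1 - (1/2:ℝ)) • p := by
      rw [hw]; module
    have hupper : 𝒮 i x ≤ (1/2:ℝ) • 𝒮 i w + (1 - (1/2:ℝ)) • 𝒮 i p := by
      conv_lhs => rw [hxcomb]
      exact hconv i w p (1/2) (by norm_num) (by norm_num)
    -- lower bound: w' = (1/2) x + (1/2) q
    have hlow1 : 𝒮 i w' ≤ (1/2:ℝ) • 𝒮 i x + (1 - (1/2:ℝ)) • 𝒮 i q := by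
      have : w' = (1/2:ℝ) • x + (1 - (1/2:ℝ)) • q := by rw [hw']; norm_num
      rw [this]
      exact hconv i x q (1/2) (by norm_num) (by norm_num)
    have hlower : (2:ℝ) • 𝒮 i w' - 𝒮 i q ≤ 𝒮 i x := by
      have h2 : (2:ℝ) • 𝒮 i w' ≤ (2:ℝ) • ((1/2:ℝ) • 𝒮 i x + (1 - (1/2:ℝ)) • 𝒮 i q) :=
        smul_le_smul_of_nonneg_left hlow1 (by norm_num)
      have h3 : (2:ℝ) • ((1/2:ℝ) • 𝒮 i x + (1 - (1/2:ℝ)) • 𝒮 i q) = 𝒮 i x + 𝒮 i q := by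
        module
      rw [h3] at h2
      exact sub_le_iff_le_add.2 h2
    have := sandwich_norm hlower hupper
    have hnw : ‖𝒮 i w‖ ≤ n := hbnd w hwball i
    have hnw' : ‖𝒮 i w'‖ ≤ n := hbnd w' hw'ball i
    have e1 : ‖(2:ℝ) • 𝒮 i w' - 𝒮 i q‖ ≤ 2*n + Mq := by
      calc ‖(2:ℝ) • 𝒮 i w' - 𝒮 i q‖ ≤ ‖(2:ℝ) • 𝒮 i w'‖ + ‖𝒮 i q‖ := norm_sub_le _ _
        _ ≤ 2*n + Mq := by
            rw [norm_smul]; simp only [Real.norm_ofNat]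
            have := hMq i; nlinarith
    have e2 : ‖(1/2:ℝ) • 𝒮 i w + (1 - (1/2:ℝ)) • 𝒮 i p‖ ≤ n + Mp := by
      calc _ ≤ ‖(1/2:ℝ) • 𝒮 i w‖ + ‖(1 - (1/2:ℝ)) • 𝒮 i p‖ := norm_add_le _ _
        _ ≤ n + Mp := by
            rw [norm_smul, norm_smul]
            have h12 : ‖(1/2:ℝ)‖ = 1/2 := by rw [Real.norm_eq_abs]; norm_num
            have h12' : ‖(1 - 1/2:ℝ)‖ = 1/2 := by rw [Real.norm_eq_abs]; norm_num
            rw [h12, h12']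
            have := hMp i
            have hn0 : (0:ℝ) ≤ n := Nat.cast_nonneg n
            have hMp0 : (0:ℝ) ≤ Mp := le_trans (norm_nonneg _) (hMp i)
            nlinarith
    linarith
  constructor
  · obtain ⟨r, hr, M, hM⟩ := key 0
    exact ⟨r, hr, M, fun i x hx => hM i x (by simpa using hx)⟩
  · intro x₀
    obtain ⟨r, hr, M, hM⟩ := key x₀
    refine ⟨r/2, by positivity, 2*M, fun i x y hx hy => ?_⟩
    have h1 : ‖𝒮 i (x+y)‖ ≤ M := by
      apply hM
      calc ‖x + y - x₀‖ ≤ ‖x - x₀‖ + ‖y‖ := by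
            have : x + y - x₀ = (x - x₀) + y := by abel
            rw [this]; exact norm_add_le _ _
        _ ≤ r := by linarith
    have h2 : ‖𝒮 i x‖ ≤ M := hM i x (by linarith)
    calc ‖𝒮 i (x+y) - 𝒮 i x‖ ≤ ‖𝒮 i (x+y)‖ + ‖𝒮 i x‖ := norm_sub_le _ _
      _ ≤ 2*M := by linarith
end

section
/- Let c₀ denote the Banach lattice of real sequences converging to 0, equipped with the supremum norm and the coordinatewise order. Define S : c₀ → ℝ by S(x) := sup_{n≥1} |x_n|^n (which is finite for every x ∈ c₀). Then S is convex and continuous, but S is not bounded: with e_k the k-th unit vector one has ‖2e_k‖_∞ = 2 and S(2e_k) = 2^k for every k, so sup_{‖x‖_∞ ≤ 2} |S(x)| = ∞. -/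
open Filter Topology Set

/-- Membership in `c₀`: real sequences (indexed from `1`, with `x 0` ignored by the
operator below) converging to `0`. -/
def memC0 (x : ℕ → ℝ) : Prop := Tendsto x atTop (𝓝 (0 : ℝ))

/-- The operator `S(x) = sup_{n ≥ 1} |x_n|^n` on `c₀`. -/
noncomputable def supPow (x : ℕ → ℝ) : ℝ := ⨆ n : ℕ, |x (n + 1)| ^ (n + 1)

lemma memC0_bddAbove {x : ℕ → ℝ} (hx : memC0 x) :
    BddAbove (Set.range fun n : ℕ => |x (n + 1)| ^ (n + 1)) := by
  obtain ⟨N, hN⟩ := (Metric.tendsto_atTop.mp hx) 1 one_pos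
  refine ⟨1 + ∑ i ∈ Finset.range N, |x (i + 1)| ^ (i + 1), ?_⟩
  rintro _ ⟨n, rfl⟩
  by_cases h : n < N
  · have h1 := Finset.single_le_sum (f := fun i => |x (i + 1)| ^ (i + 1))
      (fun i _ => pow_nonneg (abs_nonneg _) _) (Finset.mem_range.mpr h)
    linarith
  · have hn : N ≤ n + 1 := by omega
    have h1 : |x (n + 1)| ≤ 1 := by
      have := hN (n + 1) hn
      rw [Real.dist_eq, sub_zero] at this
      linarith
    have h2 : |x (n + 1)| ^ (n + 1) ≤ 1 := pow_le_one₀ (abs_nonneg _) h1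
    have hs : (0:ℝ) ≤ ∑ i ∈ Finset.range N, |x (i + 1)| ^ (i + 1) :=
      Finset.sum_nonneg fun i _ => pow_nonneg (abs_nonneg _) _
    linarith

lemma supPow_nonneg (x : ℕ → ℝ) : 0 ≤ supPow x :=
  Real.iSup_nonneg fun n => pow_nonneg (abs_nonneg _) _

lemma pow_succ_add_le (a δ : ℝ) (ha : 0 ≤ a) (hδ : 0 ≤ δ) (m : ℕ) :
    (a + δ) ^ (m + 1) ≤ a ^ (m + 1) + ((m : ℝ) + 1) * (a + δ) ^ m * δ := by
  induction m with
  | zero => simp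
  | succ m ih =>
    have h1 : a ^ (m + 1) ≤ (a + δ) ^ (m + 1) := pow_le_pow_left₀ ha (by linarith) _
    calc (a + δ) ^ (m + 1 + 1) = (a + δ) ^ (m + 1) * (a + δ) := pow_succ _ _
      _ ≤ (a ^ (m + 1) + ((m : ℝ) + 1) * (a + δ) ^ m * δ) * (a + δ) :=
          mul_le_mul_of_nonneg_right ih (by linarith)
      _ = a ^ (m + 1) * a + a ^ (m + 1) * δ + ((m : ℝ) + 1) * ((a + δ) ^ m * (a + δ)) * δ := by
          ring
      _ = a ^ (m + 1 + 1) + a ^ (m + 1) * δ + ((m : ℝ) + 1) * (a + δ) ^ (m + 1) * δ := by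
          rw [← pow_succ, ← pow_succ]
      _ ≤ a ^ (m + 1 + 1) + (a + δ) ^ (m + 1) * δ + ((m : ℝ) + 1) * (a + δ) ^ (m + 1) * δ := by
          have := mul_le_mul_of_nonneg_right h1 hδ
          linarith
      _ = a ^ (m + 1 + 1) + ((↑(m + 1) : ℝ) + 1) * (a + δ) ^ (m + 1) * δ := by push_cast; ring

/-- One-sided continuity estimate for `supPow`. -/
lemma supPow_le_key {x y : ℕ → ℝ} {ε δ R : ℝ} {N : ℕ}
    (hbx : BddAbove (Set.range fun n : ℕ => |x (n + 1)| ^ (n + 1)))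
    (hclose : ∀ n, |y n| ≤ |x n| + δ)
    (htaily : ∀ n, N ≤ n → |y (n + 1)| ≤ 3 / 4)
    (hsmall : ∀ m : ℕ, N + 1 ≤ m → ((3 : ℝ) / 4) ^ m ≤ ε)
    (hR1 : 1 ≤ R)
    (hRx : ∀ n, |x n| + δ ≤ R)
    (hδ0 : 0 ≤ δ)
    (hδD : ((N : ℝ) + 1) * R ^ (N + 1) * δ ≤ ε) :
    supPow y ≤ supPow x + ε := by
  refine ciSup_le fun n => ?_
  by_cases h : N ≤ n
  · have h1 : |y (n + 1)| ^ (n + 1) ≤ ((3 : ℝ) / 4) ^ (n + 1) :=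
      pow_le_pow_left₀ (abs_nonneg _) (htaily n h) _
    have h2 : ((3 : ℝ) / 4) ^ (n + 1) ≤ ε := hsmall (n + 1) (by omega)
    have h3 := supPow_nonneg x
    linarith
  · push_neg at h
    have h0 : (0:ℝ) ≤ |x (n + 1)| := abs_nonneg _
    have h1 : |y (n + 1)| ^ (n + 1) ≤ (|x (n + 1)| + δ) ^ (n + 1) :=
      pow_le_pow_left₀ (abs_nonneg _) (hclose (n + 1)) _
    have h2 := pow_succ_add_le (|x (n + 1)|) δ h0 hδ0 n
    have h3 : |x (n + 1)| ^ (n + 1) ≤ supPow x := le_ciSup hbx n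
    have h4 : ((n : ℝ) + 1) * (|x (n + 1)| + δ) ^ n * δ ≤ ((N : ℝ) + 1) * R ^ (N + 1) * δ := by
      have hb : |x (n + 1)| + δ ≤ R := hRx (n + 1)
      have hb0 : (0:ℝ) ≤ |x (n + 1)| + δ := by linarith
      have e1 : (|x (n + 1)| + δ) ^ n ≤ R ^ n := pow_le_pow_left₀ hb0 hb _
      have e2 : R ^ n ≤ R ^ (N + 1) := pow_le_pow_right₀ hR1 (by omega)
      have e3 : ((n : ℝ) + 1) ≤ ((N : ℝ) + 1) := by
        have : (n : ℝ) ≤ (N : ℝ) := by exact_mod_cast h.le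
        linarith
      have e4 : (0:ℝ) ≤ R ^ (N + 1) := pow_nonneg (by linarith) _
      have e5 : (0:ℝ) ≤ (n : ℝ) + 1 := by positivity
      have := mul_le_mul (mul_le_mul e3 (e1.trans e2) (pow_nonneg hb0 _) (by linarith))
        (le_refl δ) hδ0 (by positivity)
      linarith
    linarith

/-- On the Banach lattice `c₀` (real null sequences with the supremum norm
and coordinatewise order), the operator `S(x) = sup_{n≥1} |x_n|^n` is well defined
(the supremum is finite), convex and continuous, yet unbounded: for the unit vectors
`e_k` one has `‖2e_k‖_∞ = 2` while `S(2e_k) = 2^k`, so `S` is unbounded on the ball of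
radius `2`. -/
theorem convex_continuous_not_bounded_on_c0 :
    -- well-definedness: the supremum is finite for every null sequence
    (∀ x : ℕ → ℝ, memC0 x → BddAbove (Set.range fun n : ℕ => |x (n + 1)| ^ (n + 1))) ∧
    -- convexity
    (∀ x y : ℕ → ℝ, memC0 x → memC0 y → ∀ a : ℝ, 0 ≤ a → a ≤ 1 →
      supPow (fun n => a * x n + (1 - a) * y n) ≤ a * supPow x + (1 - a) * supPow y) ∧
    -- continuity with respect to the supremum norm on `c₀`
    (∀ x : ℕ → ℝ, memC0 x → ∀ ε : ℝ, 0 < ε → ∃ δ : ℝ, 0 < δ ∧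
      ∀ y : ℕ → ℝ, memC0 y → (∀ n : ℕ, |y n - x n| ≤ δ) → |supPow y - supPow x| ≤ ε) ∧
    -- the doubled unit vectors: `‖2e_k‖_∞ = 2` and `S(2e_k) = 2^k` (here for `k ≥ 1`)
    (∀ k : ℕ,
      memC0 (fun m : ℕ => if m = k + 1 then (2 : ℝ) else 0) ∧
      (∀ n : ℕ, |(if n = k + 1 then (2 : ℝ) else 0)| ≤ 2) ∧
      supPow (fun m : ℕ => if m = k + 1 then (2 : ℝ) else 0) = 2 ^ (k + 1)) ∧
    -- hence `S` is not bounded on the ball of radius `2`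
    ¬ ∃ M : ℝ, ∀ y : ℕ → ℝ, memC0 y → (∀ n : ℕ, |y n| ≤ 2) → supPow y ≤ M := by
  have hek : ∀ k : ℕ,
      memC0 (fun m : ℕ => if m = k + 1 then (2 : ℝ) else 0) ∧
      (∀ n : ℕ, |(if n = k + 1 then (2 : ℝ) else 0)| ≤ 2) ∧
      supPow (fun m : ℕ => if m = k + 1 then (2 : ℝ) else 0) = 2 ^ (k + 1) := by
    intro k
    have hmem : memC0 (fun m : ℕ => if m = k + 1 then (2 : ℝ) else 0) := by
      have heq : (fun _ : ℕ => (0 : ℝ)) =ᶠ[atTop]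
          (fun m : ℕ => if m = k + 1 then (2 : ℝ) else 0) := by
        filter_upwards [eventually_ge_atTop (k + 2)] with m hm
        rw [if_neg (by omega)]
      exact tendsto_const_nhds.congr' heq
    refine ⟨hmem, fun n => ?_, ?_⟩
    · split_ifs <;> simp
    · refine le_antisymm (ciSup_le fun n => ?_) ?_
      · by_cases h : n = k
        · subst h; simp
        · have hz : (fun m : ℕ => if m = k + 1 then (2:ℝ) else 0) (n + 1) = 0 :=
            if_neg (by omega)
          rw [hz, abs_zero, zero_pow (by omega)]
          positivity
      · have hb := memC0_bddAbove hmem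
        rw [supPow]
        refine le_trans (le_of_eq ?_) (le_ciSup hb k)
        norm_num
  refine ⟨fun x hx => memC0_bddAbove hx, ?_, ?_, hek, ?_⟩
  · -- convexity
    intro x y hx hy a ha ha1
    have ha1' : (0:ℝ) ≤ 1 - a := by linarith
    refine ciSup_le fun n => ?_
    set u := x (n + 1); set v := y (n + 1)
    have s1 : |a * u + (1 - a) * v| ≤ a * |u| + (1 - a) * |v| := by
      calc |a * u + (1 - a) * v| ≤ |a * u| + |(1 - a) * v| := abs_add_le _ _
        _ = a * |u| + (1 - a) * |v| := by
            rw [abs_mul, abs_mul, abs_of_nonneg ha, abs_of_nonneg ha1']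
    have s2 : |a * u + (1 - a) * v| ^ (n + 1) ≤ (a * |u| + (1 - a) * |v|) ^ (n + 1) :=
      pow_le_pow_left₀ (abs_nonneg _) s1 _
    have s3 : (a * |u| + (1 - a) * |v|) ^ (n + 1) ≤
        a * |u| ^ (n + 1) + (1 - a) * |v| ^ (n + 1) := by
      have := (convexOn_pow (𝕜 := ℝ) (n + 1)).2 (Set.mem_Ici.mpr (abs_nonneg u))
        (Set.mem_Ici.mpr (abs_nonneg v)) ha ha1' (by ring)
      simpa [smul_eq_mul] using this
    have s4 : a * |u| ^ (n + 1) ≤ a * supPow x :=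
      mul_le_mul_of_nonneg_left (le_ciSup (memC0_bddAbove hx) n) ha
    have s5 : (1 - a) * |v| ^ (n + 1) ≤ (1 - a) * supPow y :=
      mul_le_mul_of_nonneg_left (le_ciSup (memC0_bddAbove hy) n) ha1'
    calc |a * u + (1 - a) * v| ^ (n + 1) ≤ a * |u| ^ (n + 1) + (1 - a) * |v| ^ (n + 1) :=
          s2.trans s3
      _ ≤ a * supPow x + (1 - a) * supPow y := add_le_add s4 s5
  · -- continuity
    intro x hx ε hε
    obtain ⟨N₀, hN₀⟩ := (Metric.tendsto_atTop.mp hx) (1 / 2) (by norm_num)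
    obtain ⟨N₁, hN₁⟩ := exists_pow_lt_of_lt_one hε (show (3:ℝ)/4 < 1 by norm_num)
    set N := max N₀ N₁ with hN
    -- a uniform bound on |x|
    have habs : Tendsto (fun n => |x n|) atTop (𝓝 (0 : ℝ)) := by
      have := hx.abs; simpa using this
    obtain ⟨C, hC⟩ := habs.bddAbove_range
    have hC' : ∀ n, |x n| ≤ C := fun n => hC (Set.mem_range_self n)
    have hC0 : (0:ℝ) ≤ C := le_trans (abs_nonneg _) (hC' 0)
    set R := C + 1 with hR
    have hR1 : (1:ℝ) ≤ R := by simp [hR]; linarith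
    set D := ((N : ℝ) + 1) * R ^ (N + 1) with hD
    have hD0 : (0:ℝ) < D := by positivity
    refine ⟨min (1/4) (ε / D), lt_min (by norm_num) (div_pos hε hD0), ?_⟩
    set δ := min (1/4) (ε / D) with hδdef
    have hδ0 : (0:ℝ) ≤ δ := le_min (by norm_num) (div_pos hε hD0).le
    have hδq : δ ≤ 1/4 := min_le_left _ _
    have hδε : D * δ ≤ ε := by
      have : δ ≤ ε / D := min_le_right _ _
      calc D * δ ≤ D * (ε / D) := mul_le_mul_of_nonneg_left this hD0.le
        _ = ε := by field_simp
    intro y hy hyx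
    have hyx1 : ∀ n, |y n| ≤ |x n| + δ := fun n => by
      have := abs_sub_abs_le_abs_sub (y n) (x n)
      have := hyx n; have := abs_nonneg (y n - x n)
      calc |y n| ≤ |x n| + |y n - x n| := by
            have h := abs_add_le (x n) (y n - x n)
            simpa using h.trans_eq' (by ring_nf)
        _ ≤ |x n| + δ := by linarith [hyx n]
    have hxy1 : ∀ n, |x n| ≤ |y n| + δ := fun n => by
      have h := abs_add_le (y n) (x n - y n)
      have h2 : |x n - y n| = |y n - x n| := abs_sub_comm _ _
      calc |x n| ≤ |y n| + |x n - y n| := by simpa using h.trans_eq' (by ring_nf)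
        _ ≤ |y n| + δ := by rw [h2]; linarith [hyx n]
    have hxtail : ∀ n, N ≤ n → |x (n + 1)| ≤ 1 / 2 := fun n hn => by
      have := hN₀ (n + 1) (by omega)
      rw [Real.dist_eq, sub_zero] at this; linarith
    have hsmall : ∀ m : ℕ, N + 1 ≤ m → ((3:ℝ)/4) ^ m ≤ ε := fun m hm => by
      have h1 : ((3:ℝ)/4) ^ m ≤ ((3:ℝ)/4) ^ N₁ :=
        pow_le_pow_of_le_one (by norm_num) (by norm_num) (by omega)
      linarith
    have key1 : supPow y ≤ supPow x + ε := by
      refine supPow_le_key (memC0_bddAbove hx) hyx1 (fun n hn => ?_) hsmall hR1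
        (fun n => ?_) hδ0 (by rw [← hD]; exact hδε)
      · have := hxtail n hn
        have := hyx1 (n + 1)
        linarith
      · have := hC' n; simp only [hR]; linarith
    have key2 : supPow x ≤ supPow y + ε := by
      refine supPow_le_key (memC0_bddAbove hy) hxy1 (fun n hn => ?_) hsmall hR1
        (fun n => ?_) hδ0 (by rw [← hD]; exact hδε)
      · have := hxtail n hn; linarith
      · have := hyx1 n; have := hC' n; simp only [hR]; linarith
    rw [abs_sub_le_iff]
    constructor <;> linarith
  · -- unboundedness
    rintro ⟨M, hM⟩
    obtain ⟨k, hk⟩ := pow_unbounded_of_one_lt M (show (1:ℝ) < 2 by norm_num)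
    obtain ⟨hmem, hball, hsup⟩ := hek k
    have hle := hM _ hmem hball
    rw [hsup] at hle
    have : (2:ℝ) ^ k ≤ 2 ^ (k + 1) :=
      pow_le_pow_right₀ (by norm_num) (by omega)
    linarith
end
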